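/- arXiv:2206.12635 — 5 statements merged into one kernel-verified Lean document; each statement's English description precedes it below -/
import Mathlib

section
/- (Isbell's 7-colouring.) Take r = 1/2 (so the tiles T(i, j) are regular hexagons of unit diameter) and let Λ be the subgroup of ℤ² generated by (3, −1) and (1, 2), which has index 7 in ℤ². Then the separation of the induced 7-colouring equals √7 / 2: for any two distinct tiles T(i, j) ≠ T(i', j') with (i − i', j − j') ∈ Λ and any p ∈ T(i, j), q ∈ T(i', j') one has dist(p, q) ≥ √7 / 2, and this bound is attained by some same-coloured pair of tiles. -/
noncomputable section

/-- The Euclidean plane ℝ². -/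
abbrev Plane := EuclideanSpace ℝ (Fin 2)

/-- The point (a, b) of the Euclidean plane. -/
def pt (a b : ℝ) : Plane := WithLp.toLp 2 ![a, b]

/-- The semi-regular hexagon K(r): with y = r/2 and x = √(1 − r²)/2, the closed convex
hull of the six points (0, 1/2), (x, y), (x, −y), (0, −1/2), (−x, −y), (−x, y). -/
def hexK (r : ℝ) : Set Plane :=
  convexHull ℝ
    {pt 0 (1 / 2), pt (Real.sqrt (1 - r ^ 2) / 2) (r / 2),
      pt (Real.sqrt (1 - r ^ 2) / 2) (-(r / 2)), pt 0 (-(1 / 2)),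
      pt (-(Real.sqrt (1 - r ^ 2) / 2)) (-(r / 2)),
      pt (-(Real.sqrt (1 - r ^ 2) / 2)) (r / 2)}

/-- The center c(i, j) = ((2i + j)·x, j·(y + 1/2)) of the tile with index (i, j). -/
def center (r : ℝ) (i j : ℤ) : Plane :=
  pt ((2 * (i : ℝ) + (j : ℝ)) * (Real.sqrt (1 - r ^ 2) / 2)) ((j : ℝ) * (r / 2 + 1 / 2))

/-- The tile T(i, j) = c(i, j) + K(r). -/
def tile (r : ℝ) (i j : ℤ) : Set Plane :=
  (fun p => center r i j + p) '' hexK r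

/-- The set of distances realized by points in two distinct same-coloured tiles,
for the colouring of the tiles T(i, j) by the cosets of a subgroup Λ ≤ ℤ²:
tiles T(i, j) and T(i', j') get the same colour iff (i − i', j − j') ∈ Λ.
The separation of the colouring is the infimum of this set. -/
def sameColourDists (r : ℝ) (Λ : AddSubgroup (ℤ × ℤ)) : Set ℝ :=
  {d : ℝ | ∃ (i j i' j' : ℤ) (p q : Plane),
    (i, j) ≠ (i', j') ∧ (i - i', j - j') ∈ Λ ∧
    p ∈ tile r i j ∧ q ∈ tile r i' j' ∧ d = dist p q}

end

noncomputable section IsbellProof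

/-- The hom ℤ² → ℤ/7 whose kernel is Isbell's lattice Λ. -/
def isbellHom : ℤ × ℤ →+ ZMod 7 where
  toFun x := (x.1 : ZMod 7) + 3 * (x.2 : ZMod 7)
  map_zero' := by simp
  map_add' x y := by simp [Prod.fst_add, Prod.snd_add]; ring

lemma isbell_closure_eq_ker :
    (AddSubgroup.closure {((3 : ℤ), (-1 : ℤ)), ((1 : ℤ), (2 : ℤ))}) = isbellHom.ker := by
  apply le_antisymm
  · rw [AddSubgroup.closure_le]
    rintro x hx
    simp only [Set.mem_insert_iff, Set.mem_singleton_iff] at hx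
    rcases hx with rfl | rfl <;> · show isbellHom _ = 0; decide
  · rintro ⟨a, b⟩ hx
    have hx' : ((a + 3 * b : ℤ) : ZMod 7) = 0 := by
      push_cast
      simpa [isbellHom] using hx
    obtain ⟨n, hn⟩ := (ZMod.intCast_zmod_eq_zero_iff_dvd _ 7).mp hx'
    have hab : (a, b) = (2 * n - b) • ((3:ℤ), (-1:ℤ)) + n • ((1:ℤ), (2:ℤ)) := by
      simp only [Prod.smul_mk, smul_eq_mul, Prod.mk_add_mk, Prod.mk.injEq]
      omega
    rw [hab]
    exact add_mem (zsmul_mem (AddSubgroup.subset_closure (by simp)) _)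
      (zsmul_mem (AddSubgroup.subset_closure (by simp)) _)

lemma isbell_index :
    (AddSubgroup.closure {((3 : ℤ), (-1 : ℤ)), ((1 : ℤ), (2 : ℤ))}).index = 7 := by
  rw [isbell_closure_eq_ker, AddSubgroup.index_ker]
  have hs : Function.Surjective isbellHom := by
    intro c
    exact ⟨((c.val : ℤ), 0), by simp [isbellHom, ZMod.intCast_cast]⟩
  rw [AddMonoidHom.range_eq_top_of_surjective isbellHom hs]
  rw [Nat.card_congr AddSubgroup.topEquiv.toEquiv, Nat.card_eq_fintype_card]
  rfl

lemma pt0 (a b : ℝ) : pt a b 0 = a := rfl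
lemma pt1 (a b : ℝ) : pt a b 1 = b := rfl

lemma sq3 : Real.sqrt 3 ^ 2 = 3 := Real.sq_sqrt (by norm_num)

lemma hX : Real.sqrt (1 - (1/2 : ℝ)^2) / 2 = Real.sqrt 3 / 4 := by
  have h1 : (1 - (1/2 : ℝ)^2) = 3/4 := by norm_num
  have h2 : Real.sqrt (3/4) = Real.sqrt 3 / 2 := by
    rw [show (3/4 : ℝ) = (Real.sqrt 3 / 2)^2 by
      rw [div_pow, Real.sq_sqrt] <;> norm_num]
    exact Real.sqrt_sq (by positivity)
  rw [h1, h2]; ring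

lemma sqrt74 : Real.sqrt (7/4) = Real.sqrt 7 / 2 := by
  rw [show (7/4 : ℝ) = (Real.sqrt 7 / 2)^2 by
    rw [div_pow, Real.sq_sqrt] <;> norm_num]
  exact Real.sqrt_sq (by positivity)

lemma norm_coords (z : Plane) : ‖z‖ = Real.sqrt (z 0 ^ 2 + z 1 ^ 2) := by
  rw [EuclideanSpace.norm_eq, Fin.sum_univ_two, Real.norm_eq_abs, Real.norm_eq_abs,
    sq_abs, sq_abs]

lemma center_sub (r : ℝ) (i j i' j' : ℤ) :
    center r i j - center r i' j' = center r (i - i') (j - j') := by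
  unfold center pt
  ext k
  fin_cases k <;>
    simp [PiLp.sub_apply, Matrix.cons_val_zero, Matrix.cons_val_one, Matrix.head_cons] <;>
    push_cast <;> ring

lemma center_coord0 (a b : ℤ) :
    center (1/2) a b 0 = (2*(a:ℝ) + (b:ℝ)) * (Real.sqrt 3 / 4) := by
  show (2*(a:ℝ) + (b:ℝ)) * (Real.sqrt (1 - (1/2:ℝ)^2) / 2) = _
  rw [hX]

lemma center_coord1 (a b : ℤ) :
    center (1/2) a b 1 = (b:ℝ) * (3/4) := by
  show (b:ℝ) * ((1:ℝ)/2/2 + 1/2) = _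
  norm_num

lemma hexK_lin {α β c : ℝ}
    (h1 : |β * (1/2)| ≤ c) (h2 : |α * (Real.sqrt 3 / 4) + β * (1/4)| ≤ c)
    (h3 : |α * (Real.sqrt 3 / 4) - β * (1/4)| ≤ c)
    {p : Plane} (hp : p ∈ hexK (1/2)) : α * p 0 + β * p 1 ≤ c := by
  rw [abs_le] at h1 h2 h3
  have hlin : IsLinearMap ℝ (fun z : Plane => α * z 0 + β * z 1) := by
    constructor
    · intro x y; simp [PiLp.add_apply]; ring
    · intro m x; simp [PiLp.smul_apply, smul_eq_mul]; ring
  have hconv : Convex ℝ {z : Plane | α * z 0 + β * z 1 ≤ c} :=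
    convex_halfSpace_le hlin c
  refine convexHull_min ?_ hconv hp
  intro z hz
  simp only [Set.mem_insert_iff, Set.mem_singleton_iff] at hz
  have e : (1/2 : ℝ)/2 = 1/4 := by norm_num
  rcases hz with rfl|rfl|rfl|rfl|rfl|rfl <;>
    simp only [Set.mem_setOf_eq, pt0, pt1, hX, e] <;> linarith

lemma hexK_abs {α β c : ℝ}
    (h1 : |β * (1/2)| ≤ c) (h2 : |α * (Real.sqrt 3 / 4) + β * (1/4)| ≤ c)
    (h3 : |α * (Real.sqrt 3 / 4) - β * (1/4)| ≤ c)
    {p : Plane} (hp : p ∈ hexK (1/2)) : |α * p 0 + β * p 1| ≤ c := by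
  rw [abs_le]
  constructor
  · have := hexK_lin (α := -α) (β := -β) (c := c) ?_ ?_ ?_ hp
    · linarith
    · rw [show -β * (1/2) = -(β * (1/2)) by ring, abs_neg]; exact h1
    · rw [show -α * (Real.sqrt 3/4) + -β * (1/4) = -(α * (Real.sqrt 3/4) + β * (1/4)) by ring,
        abs_neg]; exact h2
    · rw [show -α * (Real.sqrt 3/4) - -β * (1/4) = -(α * (Real.sqrt 3/4) - β * (1/4)) by ring,
        abs_neg]; exact h3
  · exact hexK_lin h1 h2 h3 hp

lemma hexK_norm {p : Plane} (hp : p ∈ hexK (1/2)) : ‖p‖ ≤ 1/2 := by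
  have hsub : hexK (1/2) ⊆ Metric.closedBall (0 : Plane) (1/2) := by
    refine convexHull_min ?_ (convex_closedBall _ _)
    intro z hz
    simp only [Set.mem_insert_iff, Set.mem_singleton_iff] at hz
    rcases hz with rfl|rfl|rfl|rfl|rfl|rfl <;>
    · rw [Metric.mem_closedBall, dist_zero_right, norm_coords, Real.sqrt_le_iff]
      refine ⟨by norm_num, ?_⟩
      simp only [pt, Matrix.cons_val_zero, Matrix.cons_val_one, Matrix.head_cons, hX]
      nlinarith [sq3]
  have := hsub hp
  rwa [Metric.mem_closedBall, dist_zero_right] at this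

lemma case_bound (g0 g1 u0 u1 v0 v1 P0 P1 Q0 Q1 : ℝ)
    (hg : g0^2 + g1^2 = 7/4) (hgu : g0*u0 + g1*u1 = 5/4)
    (hv0 : v0 = u0 + g0) (hv1 : v1 = u1 + g1)
    (hp : |g0*P0 + g1*P1| ≤ 5/8) (hq : |g0*Q0 + g1*Q1| ≤ 5/8) :
    7/4 ≤ (v0 + (P0 - Q0))^2 + (v1 + (P1 - Q1))^2 := by
  rw [abs_le] at hp hq
  subst hv0 hv1
  nlinarith [sq_nonneg (u0 + (P0 - Q0)), sq_nonneg (u1 + (P1 - Q1))]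

lemma classify (a b : ℤ) (h7 : (7:ℤ) ∣ a + 3*b) (hN : a^2 + a*b + b^2 = 7) :
    (a = 3 ∧ b = -1) ∨ (a = 1 ∧ b = 2) ∨ (a = 2 ∧ b = -3) ∨
    (a = -3 ∧ b = 1) ∨ (a = -1 ∧ b = -2) ∨ (a = -2 ∧ b = 3) := by
  have ha2 : a^2 ≤ 9 := by nlinarith [sq_nonneg (a + 2*b)]
  have hb2 : b^2 ≤ 9 := by nlinarith [sq_nonneg (2*a + b)]
  have ha : -3 ≤ a ∧ a ≤ 3 := ⟨by nlinarith [sq_nonneg (a+3)], by nlinarith [sq_nonneg (a-3)]⟩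
  have hb : -3 ≤ b ∧ b ≤ 3 := ⟨by nlinarith [sq_nonneg (b+3)], by nlinarith [sq_nonneg (b-3)]⟩
  obtain ⟨ha1, ha3⟩ := ha; obtain ⟨hb1, hb3⟩ := hb
  have hN' : a*a + a*b + b*b = 7 := by nlinarith [hN]
  clear hN ha2 hb2
  interval_cases a <;> interval_cases b <;> omega

end IsbellProof

noncomputable section IsbellProof2

lemma final_step (a b : ℤ) (g0 g1 u0 u1 : ℝ) (p₀ q₀ : Plane)
    (hp₀ : p₀ ∈ hexK (1/2)) (hq₀ : q₀ ∈ hexK (1/2))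
    (hg : g0^2 + g1^2 = 7/4) (hgu : g0*u0 + g1*u1 = 5/4)
    (hv0 : (2*(a:ℝ) + (b:ℝ)) * (Real.sqrt 3/4) = u0 + g0)
    (hv1 : (b:ℝ) * (3/4) = u1 + g1)
    (hA : |g1 * (1/2)| ≤ 5/8) (hB : |g0 * (Real.sqrt 3/4) + g1 * (1/4)| ≤ 5/8)
    (hC : |g0 * (Real.sqrt 3/4) - g1 * (1/4)| ≤ 5/8) :
    Real.sqrt 7 / 2 ≤ ‖center (1/2) a b + (p₀ - q₀)‖ := by
  have HP := hexK_abs hA hB hC hp₀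
  have HQ := hexK_abs hA hB hC hq₀
  have hk := case_bound g0 g1 u0 u1 (u0 + g0) (u1 + g1) (p₀ 0) (p₀ 1) (q₀ 0) (q₀ 1)
    hg hgu rfl rfl HP HQ
  rw [norm_coords, ← sqrt74]
  apply Real.sqrt_le_sqrt
  have hz0 : (center (1/2) a b + (p₀ - q₀)) 0
      = (2*(a:ℝ) + (b:ℝ)) * (Real.sqrt 3/4) + (p₀ 0 - q₀ 0) := by
    rw [PiLp.add_apply, PiLp.sub_apply, center_coord0]
  have hz1 : (center (1/2) a b + (p₀ - q₀)) 1
      = (b:ℝ) * (3/4) + (p₀ 1 - q₀ 1) := by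
    rw [PiLp.add_apply, PiLp.sub_apply, center_coord1]
  rw [hz0, hz1, hv0, hv1]
  exact hk

end IsbellProof2

/-- Isbell's 7-colouring: with r = 1/2 (regular hexagons of unit diameter)
and Λ = ⟨(3, −1), (1, 2)⟩ ≤ ℤ² of index 7, the separation of the induced 7-colouring
equals √7 / 2, and this bound is attained by some same-coloured pair of tiles. -/
theorem statement5 :
    (AddSubgroup.closure {((3 : ℤ), (-1 : ℤ)), ((1 : ℤ), (2 : ℤ))}).index = 7 ∧
    IsLeast
      (sameColourDists (1 / 2) (AddSubgroup.closure {((3 : ℤ), (-1 : ℤ)), ((1 : ℤ), (2 : ℤ))}))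
      (Real.sqrt 7 / 2) := by
  refine ⟨isbell_index, ?_, ?_⟩
  · -- membership: attained by tiles (1,2) and (0,0)
    refine ⟨1, 2, 0, 0,
      center (1/2) 1 2 + pt (-(Real.sqrt (1 - (1/2:ℝ)^2)/2)) (-(1/2/2)),
      center (1/2) 0 0 + pt (Real.sqrt (1 - (1/2:ℝ)^2)/2) (1/2/2),
      by decide, ?_, ?_, ?_, ?_⟩
    · have : ((1:ℤ) - 0, (2:ℤ) - 0) = ((1:ℤ), (2:ℤ)) := by norm_num
      rw [this]
      exact AddSubgroup.subset_closure (by simp)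
    · exact ⟨_, subset_convexHull ℝ _ (by simp [Set.mem_insert_iff]), rfl⟩
    · exact ⟨_, subset_convexHull ℝ _ (by simp [Set.mem_insert_iff]), rfl⟩
    · rw [dist_eq_norm, norm_coords]
      have h0 : ((center (1/2) 1 2 + pt (-(Real.sqrt (1 - (1/2:ℝ)^2)/2)) (-(1/2/2)))
          - (center (1/2) 0 0 + pt (Real.sqrt (1 - (1/2:ℝ)^2)/2) (1/2/2))) 0
          = Real.sqrt 3 / 2 := by
        rw [PiLp.sub_apply, PiLp.add_apply, PiLp.add_apply, center_coord0, center_coord0,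
          pt0, pt0, hX]
        push_cast; ring
      have h1 : ((center (1/2) 1 2 + pt (-(Real.sqrt (1 - (1/2:ℝ)^2)/2)) (-(1/2/2)))
          - (center (1/2) 0 0 + pt (Real.sqrt (1 - (1/2:ℝ)^2)/2) (1/2/2))) 1
          = 1 := by
        rw [PiLp.sub_apply, PiLp.add_apply, PiLp.add_apply, center_coord1, center_coord1,
          pt1, pt1]
        push_cast; ring
      rw [h0, h1,
        show (Real.sqrt 3 / 2)^2 + (1:ℝ)^2 = 7/4 by linear_combination (1/4) * sq3, sqrt74]
  · -- lower bound
    rintro d ⟨i, j, i', j', p, q, hne, hmem, ⟨p₀, hp₀, rfl⟩, ⟨q₀, hq₀, rfl⟩, rfl⟩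
    obtain ⟨a, b, ha, hb⟩ : ∃ a b : ℤ, a = i - i' ∧ b = j - j' := ⟨_, _, rfl, rfl⟩
    rw [dist_eq_norm, show center (1/2) i j + p₀ - (center (1/2) i' j' + q₀)
        = center (1/2) (i - i') (j - j') + (p₀ - q₀) by rw [← center_sub]; abel,
      ← ha, ← hb]
    rw [← ha, ← hb] at hmem
    have h7 : (7:ℤ) ∣ a + 3*b := by
      rw [isbell_closure_eq_ker] at hmem
      have hc : ((a + 3*b : ℤ) : ZMod 7) = 0 := by
        push_cast
        simpa [isbellHom] using hmem
      exact (ZMod.intCast_zmod_eq_zero_iff_dvd _ 7).mp hc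
    have hne' : ¬(a = 0 ∧ b = 0) := by
      rintro ⟨h1, h2⟩
      exact hne (by rw [Prod.mk.injEq]; omega)
    have hNdvd : (7:ℤ) ∣ a^2 + a*b + b^2 := by
      obtain ⟨k, hk⟩ := h7
      exact ⟨k*(a - 2*b) + b^2, by linear_combination (a - 2*b) * hk⟩
    have hNpos : 0 < a^2 + a*b + b^2 := by
      by_contra hle
      push_neg at hle
      have h1 : (2*a + b)^2 + 3*b^2 ≤ 0 := by nlinarith
      have hb2 : b^2 = 0 := le_antisymm (by nlinarith [sq_nonneg (2*a + b)]) (sq_nonneg b)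
      have hb0 : b = 0 := by
        have := sq_eq_zero_iff.mp hb2; exact this
      have ha2 : (2*a + b)^2 = 0 := le_antisymm (by nlinarith [sq_nonneg b]) (sq_nonneg _)
      have ha0 : 2*a + b = 0 := sq_eq_zero_iff.mp ha2
      exact hne' ⟨by omega, hb0⟩
    have hsplit : a^2 + a*b + b^2 = 7 ∨ 14 ≤ a^2 + a*b + b^2 := by
      obtain ⟨m, hm⟩ := hNdvd
      have : 0 < 7 * m := hm ▸ hNpos
      rcases (by omega : m = 1 ∨ 2 ≤ m) with rfl | h2
      · left; omega
      · right; omega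
    rcases hsplit with hN7 | hN14
    · rcases classify a b h7 hN7 with ⟨ha3, hb3⟩|⟨ha3, hb3⟩|⟨ha3, hb3⟩|⟨ha3, hb3⟩|⟨ha3, hb3⟩|⟨ha3, hb3⟩ <;>
        subst ha3 <;> subst hb3
      · exact final_step 3 (-1) (3*Real.sqrt 3/4) (-(1/4)) (Real.sqrt 3/2) (-(1/2)) p₀ q₀ hp₀ hq₀
          (by linear_combination (9/16) * sq3) (by linear_combination (3/8) * sq3)
          (by push_cast; ring) (by push_cast; norm_num)
          (by rw [abs_le]; constructor <;> norm_num)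
          (by rw [abs_le]; constructor <;> nlinarith [sq3])
          (by rw [abs_le]; constructor <;> nlinarith [sq3])
      · exact final_step 1 2 (Real.sqrt 3/2) 1 (Real.sqrt 3/2) (1/2) p₀ q₀ hp₀ hq₀
          (by linear_combination (1/4) * sq3) (by linear_combination (1/4) * sq3)
          (by push_cast; ring) (by push_cast; norm_num)
          (by rw [abs_le]; constructor <;> norm_num)
          (by rw [abs_le]; constructor <;> nlinarith [sq3])
          (by rw [abs_le]; constructor <;> nlinarith [sq3])
      · exact final_step 2 (-3) (Real.sqrt 3/4) (-(5/4)) 0 (-1) p₀ q₀ hp₀ hq₀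
          (by linear_combination (1/16) * sq3) (by linear_combination (0:ℝ) * sq3)
          (by push_cast; ring) (by push_cast; norm_num)
          (by rw [abs_le]; constructor <;> norm_num)
          (by rw [abs_le]; constructor <;> nlinarith [sq3])
          (by rw [abs_le]; constructor <;> nlinarith [sq3])
      · exact final_step (-3) 1 (-(3*Real.sqrt 3/4)) (1/4) (-(Real.sqrt 3/2)) (1/2) p₀ q₀ hp₀ hq₀
          (by linear_combination (9/16) * sq3) (by linear_combination (3/8) * sq3)
          (by push_cast; ring) (by push_cast; norm_num)
          (by rw [abs_le]; constructor <;> norm_num)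
          (by rw [abs_le]; constructor <;> nlinarith [sq3])
          (by rw [abs_le]; constructor <;> nlinarith [sq3])
      · exact final_step (-1) (-2) (-(Real.sqrt 3/2)) (-1) (-(Real.sqrt 3/2)) (-(1/2)) p₀ q₀ hp₀ hq₀
          (by linear_combination (1/4) * sq3) (by linear_combination (1/4) * sq3)
          (by push_cast; ring) (by push_cast; norm_num)
          (by rw [abs_le]; constructor <;> norm_num)
          (by rw [abs_le]; constructor <;> nlinarith [sq3])
          (by rw [abs_le]; constructor <;> nlinarith [sq3])
      · exact final_step (-2) 3 (-(Real.sqrt 3/4)) (5/4) 0 1 p₀ q₀ hp₀ hq₀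
          (by linear_combination (1/16) * sq3) (by linear_combination (0:ℝ) * sq3)
          (by push_cast; ring) (by push_cast; norm_num)
          (by rw [abs_le]; constructor <;> norm_num)
          (by rw [abs_le]; constructor <;> nlinarith [sq3])
          (by rw [abs_le]; constructor <;> nlinarith [sq3])
    · -- far case: ‖v‖ ≥ √7 and the hexagons have radius 1/2
      have hv : Real.sqrt 7 ≤ ‖center (1/2) a b‖ := by
        rw [norm_coords, center_coord0, center_coord1]
        have hcast : (14:ℝ) ≤ (a:ℝ)^2 + (a:ℝ)*(b:ℝ) + (b:ℝ)^2 := by exact_mod_cast hN14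
        have h7le : (7:ℝ) ≤ ((2*(a:ℝ) + (b:ℝ)) * (Real.sqrt 3/4))^2 + ((b:ℝ)*(3/4))^2 := by
          nlinarith [sq3]
        exact Real.sqrt_le_sqrt h7le
      have hw : ‖p₀ - q₀‖ ≤ 1 :=
        le_trans (norm_sub_le _ _) (by linarith [hexK_norm hp₀, hexK_norm hq₀])
      have htri : ‖center (1/2) a b‖ - ‖p₀ - q₀‖ ≤ ‖center (1/2) a b + (p₀ - q₀)‖ := by
        have h := norm_sub_le (center (1/2) a b + (p₀ - q₀)) (p₀ - q₀)
        simp only [add_sub_cancel_right] at h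
        linarith
      have h2 : (2:ℝ) ≤ Real.sqrt 7 := by
        rw [show (2:ℝ) = Real.sqrt 4 by
          rw [show (4:ℝ) = 2^2 by norm_num, Real.sqrt_sq] <;> norm_num]
        exact Real.sqrt_le_sqrt (by norm_num)
      linarith
end

section
/- Take r = 5/6 (so x = √11/12, y = 5/12) and let Λ be the subgroup of ℤ² generated by (3, −1) and (2, 1), which has index 5 in ℤ². Then the separation of the induced 5-colouring of the tiles T(i, j) equals 5/6: any two distinct same-coloured tiles are at distance at least 5/6 from each other, and this value is attained. -/
namespace Statement8Aux
open RealInnerProductSpace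

local notation "xx" => (Real.sqrt (1 - (5/6:ℝ) ^ 2) / 2)

lemma xx_sq : xx ^ 2 = 11/144 := by
  rw [div_pow, Real.sq_sqrt (by norm_num : (0:ℝ) ≤ 1 - (5/6:ℝ) ^ 2)]
  norm_num

lemma xx_nonneg : (0:ℝ) ≤ xx := by positivity

lemma xx_mul : xx * xx = 11/144 := by have := xx_sq; nlinarith [this]

lemma xx_ge : (1/4:ℝ) ≤ xx := by nlinarith [xx_mul, xx_nonneg]

lemma inner_pt_pt (a b c d : ℝ) : ⟪pt a b, pt c d⟫ = a*c + b*d := by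
  simp [PiLp.inner_apply, Fin.sum_univ_two, pt]
  ring

lemma norm_pt (a b : ℝ) : ‖pt a b‖ = Real.sqrt (a^2 + b^2) := by
  simp [EuclideanSpace.norm_eq, Fin.sum_univ_two, pt, sq_abs]

lemma dist_pts (x y : Plane) : dist x y = Real.sqrt ((x 0 - y 0)^2 + (x 1 - y 1)^2) := by
  simp [EuclideanSpace.dist_eq, Fin.sum_univ_two, Real.dist_eq, sq_abs]

lemma hexK_bound (w : Plane) (M : ℝ)
    (h1 : |⟪w, pt 0 (1/2)⟫| ≤ M)
    (h2 : |⟪w, pt xx (5/6/2)⟫| ≤ M)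
    (h3 : |⟪w, pt xx (-(5/6/2))⟫| ≤ M)
    (h4 : |⟪w, pt 0 (-(1/2))⟫| ≤ M)
    (h5 : |⟪w, pt (-xx) (-(5/6/2))⟫| ≤ M)
    (h6 : |⟪w, pt (-xx) (5/6/2)⟫| ≤ M) :
    ∀ p ∈ hexK (5/6), |⟪w, p⟫| ≤ M := by
  intro p hp
  rw [hexK] at hp
  have hconv : Convex ℝ {p : Plane | |⟪w, p⟫| ≤ M} := by
    have hlin : IsLinearMap ℝ (fun p : Plane => ⟪w, p⟫) :=
      ⟨fun u v => inner_add_right _ _ _, fun c v => real_inner_smul_right _ _ _⟩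
    have h : {p : Plane | |⟪w, p⟫| ≤ M} = (fun p : Plane => ⟪w, p⟫) ⁻¹' Set.Icc (-M) M := by
      ext p; simp [abs_le]
    rw [h]
    exact (convex_Icc _ _).is_linear_preimage hlin
  refine convexHull_min ?_ hconv hp
  rintro v hv
  simp only [Set.mem_insert_iff, Set.mem_singleton_iff] at hv
  rcases hv with rfl|rfl|rfl|rfl|rfl|rfl <;> assumption

lemma dist_ge (w c c' p q : Plane) (M D : ℝ)
    (hw : ∀ v ∈ hexK (5/6), |⟪w, v⟫| ≤ M)
    (hp : p ∈ hexK (5/6)) (hq : q ∈ hexK (5/6))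
    (hD : D ≤ ⟪w, c - c'⟫) :
    D - 2*M ≤ ‖w‖ * dist (c + p) (c' + q) := by
  have h1 := abs_le.mp (hw p hp)
  have h2 := abs_le.mp (hw q hq)
  have key : ⟪w, (c + p) - (c' + q)⟫ ≤ ‖w‖ * dist (c + p) (c' + q) := by
    rw [dist_eq_norm]; exact real_inner_le_norm _ _
  have hD' : D ≤ ⟪w, c⟫ - ⟪w, c'⟫ := by rwa [inner_sub_right] at hD
  have hexp : ⟪w, (c + p) - (c' + q)⟫ = (⟪w, c⟫ - ⟪w, c'⟫) + (⟪w, p⟫ - ⟪w, q⟫) := by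
    have h3 : (c + p) - (c' + q) = (c - c') + (p - q) := by abel
    rw [h3, inner_add_right, inner_sub_right, inner_sub_right]
  linarith

set_option maxHeartbeats 1000000 in
lemma case1_aux (ε : ℝ) (hε : ε = 1 ∨ ε = -1) (c c' p q : Plane)
    (hp : p ∈ hexK (5/6)) (hq : q ∈ hexK (5/6))
    (hinner : 10 * xx ≤ ⟪pt ε 0, c - c'⟫) :
    5/6 ≤ dist (c + p) (c' + q) := by
  have hb : ∀ v ∈ hexK (5/6), |⟪pt ε 0, v⟫| ≤ xx := by
    refine hexK_bound _ _ ?_ ?_ ?_ ?_ ?_ ?_ <;>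
      (rw [inner_pt_pt]; rcases hε with rfl|rfl <;> rw [abs_le] <;>
        constructor <;> linarith [xx_nonneg])
  have h := dist_ge (pt ε 0) c c' p q xx (10*xx) hb hp hq hinner
  have hnorm : ‖pt ε 0‖ = 1 := by
    rw [norm_pt]; rcases hε with rfl|rfl <;> norm_num
  rw [hnorm, one_mul] at h
  have := xx_ge
  linarith

set_option maxHeartbeats 1000000 in
lemma case2_aux (δ : ℝ) (hδ : δ = 1 ∨ δ = -1) (c c' p q : Plane)
    (hp : p ∈ hexK (5/6)) (hq : q ∈ hexK (5/6))
    (hinner : 11/6 ≤ ⟪pt 0 δ, c - c'⟫) :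
    5/6 ≤ dist (c + p) (c' + q) := by
  have hb : ∀ v ∈ hexK (5/6), |⟪pt 0 δ, v⟫| ≤ 1/2 := by
    refine hexK_bound _ _ ?_ ?_ ?_ ?_ ?_ ?_ <;>
      (rw [inner_pt_pt]; rcases hδ with rfl|rfl <;> rw [abs_le] <;>
        constructor <;> linarith [xx_nonneg])
  have h := dist_ge (pt 0 δ) c c' p q (1/2) (11/6) hb hp hq hinner
  have hnorm : ‖pt 0 δ‖ = 1 := by
    rw [norm_pt]; rcases hδ with rfl|rfl <;> norm_num
  rw [hnorm, one_mul] at h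
  linarith

set_option maxHeartbeats 1000000 in
lemma case3_aux (ε δ : ℝ) (hε : ε = 1 ∨ ε = -1) (hδ : δ = 1 ∨ δ = -1) (c c' p q : Plane)
    (hp : p ∈ hexK (5/6)) (hq : q ∈ hexK (5/6))
    (hinner : 11/9 ≤ ⟪pt (ε*(3*xx)) (δ/12), c - c'⟫) :
    5/6 ≤ dist (c + p) (c' + q) := by
  have hb : ∀ v ∈ hexK (5/6), |⟪pt (ε*(3*xx)) (δ/12), v⟫| ≤ 19/72 := by
    refine hexK_bound _ _ ?_ ?_ ?_ ?_ ?_ ?_ <;>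
      (rw [inner_pt_pt]; rcases hε with rfl|rfl <;> rcases hδ with rfl|rfl <;>
        rw [abs_le] <;> constructor <;> linarith [xx_mul, xx_nonneg])
  have h := dist_ge (pt (ε*(3*xx)) (δ/12)) c c' p q (19/72) (11/9) hb hp hq hinner
  have hnorm : ‖pt (ε*(3*xx)) (δ/12)‖ = 5/6 := by
    rw [norm_pt]
    have h1 : (ε*(3*xx))^2 + (δ/12)^2 = (5/6)^2 := by
      rcases hε with rfl|rfl <;> rcases hδ with rfl|rfl <;> nlinarith [xx_mul]
    rw [h1, Real.sqrt_sq (by norm_num)]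
  rw [hnorm] at h
  linarith

lemma center_sub (i j i' j' : ℤ) :
    center (5/6) i j - center (5/6) i' j' =
      pt (((2*(i-i') + (j-j') : ℤ) : ℝ) * xx) ((((j-j') : ℤ) : ℝ) * (11/12)) := by
  ext t
  fin_cases t <;>
  · simp only [center, pt]
    push_cast
    simp
    ring

set_option maxHeartbeats 1000000 in
lemma lower (i j i' j' : ℤ) (hne : (i, j) ≠ (i', j'))
    (hdvd : (5:ℤ) ∣ ((i - i') - 2*(j - j')))
    (p q : Plane) (hp : p ∈ hexK (5/6)) (hq : q ∈ hexK (5/6)) :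
    5/6 ≤ dist (center (5/6) i j + p) (center (5/6) i' j' + q) := by
  obtain ⟨k, hk⟩ := hdvd
  have hne' : i ≠ i' ∨ j ≠ j' := by
    by_contra h
    push_neg at h
    exact hne (by rw [h.1, h.2])
  have hcs := center_sub i j i' j'
  rcases eq_or_ne (j - j') 0 with hb0 | hbne
  · rcases le_or_gt 1 k with hk1 | hk1
    · apply case1_aux 1 (Or.inl rfl) _ _ p q hp hq
      rw [hcs, inner_pt_pt]
      have hA : (10:ℝ) ≤ ((2*(i-i') + (j-j') : ℤ) : ℝ) := by
        exact_mod_cast (show (10:ℤ) ≤ 2*(i-i') + (j-j') by omega)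
      nlinarith [mul_le_mul_of_nonneg_right hA xx_nonneg]
    · apply case1_aux (-1) (Or.inr rfl) _ _ p q hp hq
      rw [hcs, inner_pt_pt]
      have hA : ((2*(i-i') + (j-j') : ℤ) : ℝ) ≤ -10 := by
        exact_mod_cast (show (2*(i-i') + (j-j') : ℤ) ≤ -10 by omega)
      nlinarith [mul_le_mul_of_nonneg_right hA xx_nonneg]
  · rcases eq_or_ne (j - j') 1 with hb1 | hbne1
    · have hB : (((j-j') : ℤ) : ℝ) = 1 := by exact_mod_cast hb1
      rcases le_or_gt 0 k with hk1 | hk1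
      · apply case3_aux 1 1 (Or.inl rfl) (Or.inl rfl) _ _ p q hp hq
        rw [hcs, inner_pt_pt, hB]
        have hA : (5:ℝ) ≤ ((2*(i-i') + (j-j') : ℤ) : ℝ) := by
          exact_mod_cast (show (5:ℤ) ≤ 2*(i-i') + (j-j') by omega)
        nlinarith [xx_mul, mul_le_mul_of_nonneg_right hA (mul_self_nonneg xx)]
      · apply case3_aux (-1) 1 (Or.inr rfl) (Or.inl rfl) _ _ p q hp hq
        rw [hcs, inner_pt_pt, hB]
        have hA : ((2*(i-i') + (j-j') : ℤ) : ℝ) ≤ -5 := by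
          exact_mod_cast (show (2*(i-i') + (j-j') : ℤ) ≤ -5 by omega)
        nlinarith [xx_mul, mul_le_mul_of_nonneg_right (neg_le_neg hA) (mul_self_nonneg xx)]
    · rcases eq_or_ne (j - j') (-1) with hbm1 | hbnem1
      · have hB : (((j-j') : ℤ) : ℝ) = -1 := by exact_mod_cast hbm1
        rcases le_or_gt 1 k with hk1 | hk1
        · apply case3_aux 1 (-1) (Or.inl rfl) (Or.inr rfl) _ _ p q hp hq
          rw [hcs, inner_pt_pt, hB]
          have hA : (5:ℝ) ≤ ((2*(i-i') + (j-j') : ℤ) : ℝ) := by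
            exact_mod_cast (show (5:ℤ) ≤ 2*(i-i') + (j-j') by omega)
          nlinarith [xx_mul, mul_le_mul_of_nonneg_right hA (mul_self_nonneg xx)]
        · apply case3_aux (-1) (-1) (Or.inr rfl) (Or.inr rfl) _ _ p q hp hq
          rw [hcs, inner_pt_pt, hB]
          have hA : ((2*(i-i') + (j-j') : ℤ) : ℝ) ≤ -5 := by
            exact_mod_cast (show (2*(i-i') + (j-j') : ℤ) ≤ -5 by omega)
          nlinarith [xx_mul, mul_le_mul_of_nonneg_right (neg_le_neg hA) (mul_self_nonneg xx)]
      · rcases le_or_gt 2 (j - j') with hb2 | hb2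
        · apply case2_aux 1 (Or.inl rfl) _ _ p q hp hq
          rw [hcs, inner_pt_pt]
          have hB : (2:ℝ) ≤ (((j-j') : ℤ) : ℝ) := by exact_mod_cast hb2
          nlinarith [hB]
        · apply case2_aux (-1) (Or.inr rfl) _ _ p q hp hq
          rw [hcs, inner_pt_pt]
          have hB : (((j-j') : ℤ) : ℝ) ≤ -2 := by
            exact_mod_cast (show (j - j' : ℤ) ≤ -2 by omega)
          nlinarith [hB]

def phi : ℤ × ℤ →+ ZMod 5 :=
  AddMonoidHom.mk' (fun p => (p.1 : ZMod 5) - 2 * (p.2 : ZMod 5)) (by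
    intro x y
    simp only [Prod.fst_add, Prod.snd_add]
    push_cast
    ring)

lemma closure_eq :
    AddSubgroup.closure {((3:ℤ), (-1:ℤ)), ((2:ℤ), (1:ℤ))} = phi.ker := by
  apply le_antisymm
  · rw [AddSubgroup.closure_le]
    rintro v hv
    simp only [Set.mem_insert_iff, Set.mem_singleton_iff] at hv
    rw [SetLike.mem_coe, AddMonoidHom.mem_ker]
    rcases hv with rfl | rfl
    · show ((3:ℤ) : ZMod 5) - 2 * (((-1):ℤ) : ZMod 5) = 0
      decide
    · show ((2:ℤ) : ZMod 5) - 2 * (((1):ℤ) : ZMod 5) = 0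
      decide
  · rintro ⟨a, b⟩ hv
    rw [AddMonoidHom.mem_ker] at hv
    have hv' : (a : ZMod 5) - 2 * (b : ZMod 5) = 0 := hv
    have h5 : (5:ℤ) ∣ a - 2*b := by
      have h0 : ((a - 2*b : ℤ) : ZMod 5) = 0 := by
        push_cast
        linear_combination hv'
      exact (ZMod.intCast_zmod_eq_zero_iff_dvd _ 5).mp h0
    obtain ⟨k, hk⟩ := h5
    have h3 : ((3:ℤ), (-1:ℤ)) ∈ AddSubgroup.closure {((3:ℤ),(-1:ℤ)), ((2:ℤ),(1:ℤ))} :=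
      AddSubgroup.subset_closure (by simp)
    have h2 : ((2:ℤ), (1:ℤ)) ∈ AddSubgroup.closure {((3:ℤ),(-1:ℤ)), ((2:ℤ),(1:ℤ))} :=
      AddSubgroup.subset_closure (by simp)
    have heq : ((a, b) : ℤ × ℤ) = k • ((3:ℤ),(-1:ℤ)) + (b + k) • ((2:ℤ),(1:ℤ)) := by
      simp only [Prod.smul_mk, Prod.mk_add_mk, smul_eq_mul, Prod.mk.injEq]
      constructor <;> omega
    rw [heq]
    exact AddSubgroup.add_mem _ (AddSubgroup.zsmul_mem _ h3 k) (AddSubgroup.zsmul_mem _ h2 (b+k))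

lemma index5 : (AddSubgroup.closure {((3:ℤ), (-1:ℤ)), ((2:ℤ), (1:ℤ))}).index = 5 := by
  rw [closure_eq, AddSubgroup.index_ker]
  have hsurj : Function.Surjective phi := by
    intro z
    obtain ⟨n, rfl⟩ := ZMod.intCast_surjective z
    refine ⟨(n, 0), ?_⟩
    show (n : ZMod 5) - 2 * ((0:ℤ) : ZMod 5) = (n : ZMod 5)
    push_cast
    ring
  rw [AddMonoidHom.range_eq_top_of_surjective phi hsurj]
  have h := Nat.card_congr (AddSubgroup.topEquiv (G := ZMod 5)).toEquiv
  rw [h, Nat.card_zmod]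

end Statement8Aux

/-- with r = 5/6 and Λ = ⟨(3, -1), (2, 1)⟩ ≤ ℤ² of index 5,
the separation of the induced 5-colouring of the tiles T(i, j) equals the stated
value, and this value is attained. -/
theorem statement8 :
    (AddSubgroup.closure {(((3) : ℤ), ((-1) : ℤ)), (((2) : ℤ), ((1) : ℤ))}).index = 5 ∧
    IsLeast
      (sameColourDists (5 / 6)
        (AddSubgroup.closure {(((3) : ℤ), ((-1) : ℤ)), (((2) : ℤ), ((1) : ℤ))}))
      ((5 : ℝ) / 6) := by
  refine ⟨Statement8Aux.index5, ?_, ?_⟩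
  · refine ⟨0, 0, -1, 2, center (5/6) 0 0 + pt 0 (1/2),
      center (5/6) (-1) 2 + pt 0 (-(1/2)), by decide, ?_, ?_, ?_, ?_⟩
    · have h3 : ((3:ℤ), (-1:ℤ)) ∈ AddSubgroup.closure {((3:ℤ),(-1:ℤ)), ((2:ℤ),(1:ℤ))} :=
        AddSubgroup.subset_closure (by simp)
      have h2 : ((2:ℤ), (1:ℤ)) ∈ AddSubgroup.closure {((3:ℤ),(-1:ℤ)), ((2:ℤ),(1:ℤ))} :=
        AddSubgroup.subset_closure (by simp)
      have heq : (((0:ℤ) - (-1), (0:ℤ) - 2) : ℤ × ℤ) = ((3:ℤ),(-1:ℤ)) - ((2:ℤ),(1:ℤ)) := by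
        decide
      rw [heq]
      exact sub_mem h3 h2
    · exact ⟨pt 0 (1/2), by rw [hexK]; exact subset_convexHull ℝ _ (by simp), rfl⟩
    · exact ⟨pt 0 (-(1/2)), by rw [hexK]; exact subset_convexHull ℝ _ (by simp), rfl⟩
    · rw [Statement8Aux.dist_pts]
      have e0 : (center (5/6) 0 0 + pt 0 (1/2)) 0 -
          (center (5/6) (-1) 2 + pt 0 (-(1/2))) 0 = 0 := by
        simp [center, pt]
      have e1 : (center (5/6) 0 0 + pt 0 (1/2)) 1 -
          (center (5/6) (-1) 2 + pt 0 (-(1/2))) 1 = -(5/6) := by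
        simp [center, pt]
        norm_num
      rw [e0, e1]
      rw [show (0:ℝ)^2 + (-(5/6):ℝ)^2 = (5/6)^2 by norm_num,
        Real.sqrt_sq (by norm_num : (0:ℝ) ≤ 5/6)]
  · rintro d ⟨i, j, i', j', p, q, hne, hmem, hp, hq, rfl⟩
    rw [tile, Set.mem_image] at hp hq
    obtain ⟨v1, hv1, rfl⟩ := hp
    obtain ⟨v2, hv2, rfl⟩ := hq
    have hdvd : (5:ℤ) ∣ (i - i') - 2*(j - j') := by
      rw [Statement8Aux.closure_eq, AddMonoidHom.mem_ker] at hmem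
      have hm2 : ((i - i' : ℤ) : ZMod 5) - 2 * ((j - j' : ℤ) : ZMod 5) = 0 := hmem
      have h0 : (((i - i') - 2*(j - j') : ℤ) : ZMod 5) = 0 := by
        push_cast
        push_cast at hm2
        linear_combination hm2
      exact (ZMod.intCast_zmod_eq_zero_iff_dvd _ 5).mp h0
    exact Statement8Aux.lower i j i' j' hne hdvd v1 v2 hv1 hv2
end

section
/- Take r = 3/4 (so x = √7/8, y = 3/8) and let Λ be the subgroup of ℤ² generated by (4, −1) and (2, 2), which has index 10 in ℤ². Then the separation of the induced 10-colouring of the tiles T(i, j) equals √11 / 2 (i.e. separation squared equals 11/4), and this value is attained. -/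
open scoped RealInnerProductSpace

noncomputable section Aux

/-! ### Arithmetic of the subgroup -/

def phi10 : ℤ × ℤ →+ ZMod 10 where
  toFun p := (p.1 : ZMod 10) + 4 * (p.2 : ZMod 10)
  map_zero' := by simp
  map_add' p q := by simp [Prod.fst_add, Prod.snd_add]; ring

lemma phi10_surj : Function.Surjective phi10 := by
  intro z
  obtain ⟨x, hx⟩ := ZMod.intCast_surjective (n := 10) z
  exact ⟨(x, 0), by simp [phi10, hx]⟩

lemma closure_eq :
    AddSubgroup.closure {(((4) : ℤ), ((-1) : ℤ)), (((2) : ℤ), ((2) : ℤ))} = phi10.ker := by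
  apply le_antisymm
  · rw [AddSubgroup.closure_le]
    rintro p (rfl | rfl) <;> simp [AddMonoidHom.mem_ker, phi10] <;> decide
  · rintro ⟨a, b⟩ hab
    have h10 : (10 : ℤ) ∣ a + 4 * b := by
      have : ((a + 4 * b : ℤ) : ZMod 10) = 0 := by
        push_cast
        simpa [phi10, AddMonoidHom.mem_ker] using hab
      exact (ZMod.intCast_zmod_eq_zero_iff_dvd _ _).mp this
    obtain ⟨m, n, hm, hn⟩ : ∃ m n : ℤ, a = 4*m + 2*n ∧ b = -m + 2*n :=
      ⟨(a-b)/5, (a+4*b)/10, by omega, by omega⟩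
    have h : ((a, b) : ℤ × ℤ) = m • ((4 : ℤ), (-1 : ℤ)) + n • ((2 : ℤ), (2 : ℤ)) := by
      simp [Prod.ext_iff, smul_eq_mul]
      omega
    rw [h]
    exact add_mem (AddSubgroup.zsmul_mem _ (AddSubgroup.subset_closure (by simp)) m)
      (AddSubgroup.zsmul_mem _ (AddSubgroup.subset_closure (by simp)) n)

lemma mem_closure_dvd {a b : ℤ}
    (h : (a, b) ∈ AddSubgroup.closure {(((4) : ℤ), ((-1) : ℤ)), (((2) : ℤ), ((2) : ℤ))}) :
    (10 : ℤ) ∣ a + 4 * b := by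
  rw [closure_eq, AddMonoidHom.mem_ker] at h
  have : ((a + 4 * b : ℤ) : ZMod 10) = 0 := by push_cast; simpa [phi10] using h
  exact (ZMod.intCast_zmod_eq_zero_iff_dvd _ _).mp this

/-- integer enumeration of the near lattice vectors -/
lemma intlem (a b : ℤ) (h10 : (10:ℤ) ∣ a + 4*b) (h0 : ¬(a = 0 ∧ b = 0))
    (h1 : ¬(a = 4 ∧ b = -1)) (h2 : ¬(a = -4 ∧ b = 1)) (h3 : ¬(a = 2 ∧ b = 2))
    (h4 : ¬(a = -2 ∧ b = -2)) (h5 : ¬(a = 2 ∧ b = -3)) (h6 : ¬(a = -2 ∧ b = 3)) :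
    453 ≤ 7*(2*a+b)^2 + 49*b^2 := by
  rcases le_or_gt 4 b with hb | hb
  · nlinarith [sq_nonneg (2*a+b), sq_nonneg b]
  rcases le_or_gt b (-4) with hb' | hb'
  · nlinarith [sq_nonneg (2*a+b), sq_nonneg b]
  have key : ∀ t : ℤ, 13 ≤ t ∨ t ≤ -13 → 453 ≤ 7*t^2 + 49*b^2 := by
    rintro t (h | h) <;> nlinarith [sq_nonneg b]
  apply key
  interval_cases b <;> omega

/-! ### Plane helpers -/

lemma pt_add (a b c d : ℝ) : pt a b + pt c d = pt (a+c) (b+d) := by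
  ext i
  fin_cases i <;> rfl

lemma pt_sub (a b c d : ℝ) : pt a b - pt c d = pt (a-c) (b-d) := by
  ext i
  fin_cases i <;> rfl

lemma pt_congr {a b c d : ℝ} (h1 : a = c) (h2 : b = d) : pt a b = pt c d := by
  rw [h1, h2]

lemma neg_pt (a b : ℝ) : -pt a b = pt (-a) (-b) := by
  ext i
  fin_cases i <;> rfl

lemma inner_pt (a b c d : ℝ) : ⟪pt a b, pt c d⟫ = a*c + b*d := by
  simp [pt, PiLp.inner_apply, Fin.sum_univ_two]
  ring

lemma norm_pt (a b : ℝ) : ‖pt a b‖ = Real.sqrt (a^2 + b^2) := by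
  rw [EuclideanSpace.norm_eq]
  simp [pt, Fin.sum_univ_two, Real.norm_eq_abs, sq_abs]

lemma inner_hull_le {S : Set Plane} {n : Plane} {M : ℝ}
    (h : ∀ s ∈ S, ⟪n, s⟫ ≤ M) {k : Plane} (hk : k ∈ convexHull ℝ S) : ⟪n, k⟫ ≤ M := by
  have hlin : IsLinearMap ℝ (fun z : Plane => ⟪n, z⟫) :=
    ⟨fun x y => inner_add_right n x y, fun c x => real_inner_smul_right n x c⟩
  exact convexHull_min h (convex_halfSpace_le hlin M) hk

lemma inner_hull_ge {S : Set Plane} {n : Plane} {M : ℝ}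
    (h : ∀ s ∈ S, -M ≤ ⟪n, s⟫) {k : Plane} (hk : k ∈ convexHull ℝ S) : -M ≤ ⟪n, k⟫ := by
  have hlin : IsLinearMap ℝ (fun z : Plane => ⟪n, z⟫) :=
    ⟨fun x y => inner_add_right n x y, fun c x => real_inner_smul_right n x c⟩
  exact convexHull_min h (convex_halfSpace_ge hlin (-M)) hk

lemma norm_hull_le {S : Set Plane} {R : ℝ}
    (h : ∀ s ∈ S, ‖s‖ ≤ R) {k : Plane} (hk : k ∈ convexHull ℝ S) : ‖k‖ ≤ R := by
  have hsub : convexHull ℝ S ⊆ Metric.closedBall 0 R :=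
    convexHull_min (fun s hs => by simpa [Metric.mem_closedBall, dist_zero_right] using h s hs)
      (convex_closedBall 0 R)
  simpa [Metric.mem_closedBall, dist_zero_right] using hsub hk

/-! ### The hexagon for r = 3/4 -/

def Xc : ℝ := Real.sqrt (1 - (3/4 : ℝ) ^ 2) / 2

lemma hX0 : 0 ≤ Xc := by unfold Xc; positivity

lemma hX2 : Xc ^ 2 = 7/64 := by
  have h : (0:ℝ) ≤ 1 - (3/4 : ℝ)^2 := by norm_num
  rw [Xc, div_pow, Real.sq_sqrt h]
  norm_num

def Vset : Set Plane :=
  {pt 0 (1 / 2), pt Xc (3 / 4 / 2), pt Xc (-(3 / 4 / 2)), pt 0 (-(1 / 2)),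
    pt (-Xc) (-(3 / 4 / 2)), pt (-Xc) (3 / 4 / 2)}

lemma hexK34 : hexK (3 / 4) = convexHull ℝ Vset := rfl

lemma center34 (i j : ℤ) :
    center (3 / 4) i j = pt ((2*(i:ℝ)+(j:ℝ)) * Xc) ((j:ℝ) * (7/8)) := by
  unfold center Xc
  norm_num

lemma center34_sub (i j i' j' : ℤ) :
    center (3/4) i j - center (3/4) i' j' = center (3/4) (i-i') (j-j') := by
  rw [center34, center34, center34, pt_sub]
  exact pt_congr (by push_cast; ring) (by push_cast; ring)

lemma center34_neg (a b a' b' : ℤ) (ha : a + a' = 0) (hb : b + b' = 0) :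
    center (3/4) a b = - center (3/4) a' b' := by
  rw [center34, center34, neg_pt]
  have ha' : (a:ℝ) + (a':ℝ) = 0 := by exact_mod_cast ha
  have hb' : (b:ℝ) + (b':ℝ) = 0 := by exact_mod_cast hb
  exact pt_congr (by linear_combination Xc * (2*ha' + hb'))
    (by linear_combination (7/8) * hb')

lemma vertex_norm {v : Plane} (hv : v ∈ Vset) : ‖v‖ ≤ 1/2 := by
  have key : ∀ a b : ℝ, a^2 + b^2 ≤ 1/4 → ‖pt a b‖ ≤ 1/2 := by
    intro a b h
    rw [norm_pt]
    calc Real.sqrt (a^2+b^2) ≤ Real.sqrt (1/4) := Real.sqrt_le_sqrt h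
    _ = 1/2 := by
        rw [show (1/4:ℝ) = (1/2)^2 by norm_num, Real.sqrt_sq (by norm_num : (0:ℝ) ≤ 1/2)]
  simp only [Vset, Set.mem_insert_iff, Set.mem_singleton_iff] at hv
  rcases hv with rfl|rfl|rfl|rfl|rfl|rfl <;> apply key <;> nlinarith [hX2]

lemma hex_norm_le {k : Plane} (hk : k ∈ hexK (3/4)) : ‖k‖ ≤ 1/2 :=
  norm_hull_le (fun _ hs => vertex_norm hs) (hexK34 ▸ hk)

/-! ### Master near-case bound -/

lemma near_bound {n c : Plane} {M N : ℝ} (hN : ‖n‖ = N) (hN0 : 0 < N)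
    (hub : ∀ s ∈ Vset, ⟪n, s⟫ ≤ M)
    (hlb : ∀ s ∈ Vset, -M ≤ ⟪n, s⟫)
    (hc : N * (Real.sqrt 11 / 2) ≤ ⟪n, c⟫ - 2*M)
    {k1 k2 : Plane} (hk1 : k1 ∈ hexK (3/4)) (hk2 : k2 ∈ hexK (3/4)) :
    Real.sqrt 11 / 2 ≤ ‖c + k1 - k2‖ := by
  rw [hexK34] at hk1 hk2
  have h1 : -M ≤ ⟪n, k1⟫ := inner_hull_ge hlb hk1
  have h2 : ⟪n, k2⟫ ≤ M := inner_hull_le hub hk2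
  have hinner : ⟪n, c + k1 - k2⟫ = ⟪n, c⟫ + ⟪n, k1⟫ - ⟪n, k2⟫ := by
    rw [inner_sub_right, inner_add_right]
  have hcs : ⟪n, c + k1 - k2⟫ ≤ N * ‖c + k1 - k2‖ := by
    rw [← hN]; exact real_inner_le_norm _ _
  have h3 : N * (Real.sqrt 11 / 2) ≤ N * ‖c + k1 - k2‖ := by
    rw [hinner] at hcs; linarith
  exact le_of_mul_le_mul_left h3 hN0

lemma sqrt176 : Real.sqrt 176 = 4 * Real.sqrt 11 := by
  rw [show (176:ℝ) = 4^2 * 11 by norm_num, Real.sqrt_mul (by positivity),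
    Real.sqrt_sq (by norm_num : (0:ℝ) ≤ 4)]

lemma h11sq : Real.sqrt 11 ^ 2 = 11 := Real.sq_sqrt (by norm_num)

lemma sqrt11_pos : 0 < Real.sqrt 11 := Real.sqrt_pos.mpr (by norm_num)

/-- case (4, -1) -/
lemma case_A {k1 k2 : Plane} (hk1 : k1 ∈ hexK (3/4)) (hk2 : k2 ∈ hexK (3/4)) :
    Real.sqrt 11 / 2 ≤ ‖center (3/4) 4 (-1) + k1 - k2‖ := by
  apply near_bound (n := pt (40*Xc) (-1)) (M := 19/4) (N := 4 * Real.sqrt 11)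
    ?_ (by positivity) ?_ ?_ ?_ hk1 hk2
  · rw [norm_pt, show (40*Xc)^2 + (-1:ℝ)^2 = 176 by nlinarith [hX2], sqrt176]
  · intro s hs
    simp only [Vset, Set.mem_insert_iff, Set.mem_singleton_iff] at hs
    rcases hs with rfl|rfl|rfl|rfl|rfl|rfl <;> rw [inner_pt] <;> nlinarith [hX2]
  · intro s hs
    simp only [Vset, Set.mem_insert_iff, Set.mem_singleton_iff] at hs
    rcases hs with rfl|rfl|rfl|rfl|rfl|rfl <;> rw [inner_pt] <;> nlinarith [hX2]
  · have hi : ⟪pt (40*Xc) (-1), center (3/4) 4 (-1)⟫ = 63/2 := by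
      rw [center34, inner_pt]
      push_cast
      linear_combination 280 * hX2
    rw [hi]
    nlinarith [h11sq, sqrt11_pos]

/-- case (2, 2) -/
lemma case_B {k1 k2 : Plane} (hk1 : k1 ∈ hexK (3/4)) (hk2 : k2 ∈ hexK (3/4)) :
    Real.sqrt 11 / 2 ≤ ‖center (3/4) 2 2 + k1 - k2‖ := by
  apply near_bound (n := pt (8*Xc) 2) (M := 13/8) (N := Real.sqrt 11)
    ?_ sqrt11_pos ?_ ?_ ?_ hk1 hk2
  · rw [norm_pt, show (8*Xc)^2 + (2:ℝ)^2 = 11 by nlinarith [hX2]]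
  · intro s hs
    simp only [Vset, Set.mem_insert_iff, Set.mem_singleton_iff] at hs
    rcases hs with rfl|rfl|rfl|rfl|rfl|rfl <;> rw [inner_pt] <;> nlinarith [hX2]
  · intro s hs
    simp only [Vset, Set.mem_insert_iff, Set.mem_singleton_iff] at hs
    rcases hs with rfl|rfl|rfl|rfl|rfl|rfl <;> rw [inner_pt] <;> nlinarith [hX2]
  · have hi : ⟪pt (8*Xc) 2, center (3/4) 2 2⟫ = 35/4 := by
      rw [center34, inner_pt]
      push_cast
      linear_combination 48 * hX2
    rw [hi]
    nlinarith [h11sq, sqrt11_pos]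

/-- case (2, -3) -/
lemma case_C {k1 k2 : Plane} (hk1 : k1 ∈ hexK (3/4)) (hk2 : k2 ∈ hexK (3/4)) :
    Real.sqrt 11 / 2 ≤ ‖center (3/4) 2 (-3) + k1 - k2‖ := by
  apply near_bound (n := pt (8*Xc) (-13)) (M := 13/2) (N := 4 * Real.sqrt 11)
    ?_ (by positivity) ?_ ?_ ?_ hk1 hk2
  · rw [norm_pt, show (8*Xc)^2 + (-13:ℝ)^2 = 176 by nlinarith [hX2], sqrt176]
  · intro s hs
    simp only [Vset, Set.mem_insert_iff, Set.mem_singleton_iff] at hs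
    rcases hs with rfl|rfl|rfl|rfl|rfl|rfl <;> rw [inner_pt] <;> nlinarith [hX2]
  · intro s hs
    simp only [Vset, Set.mem_insert_iff, Set.mem_singleton_iff] at hs
    rcases hs with rfl|rfl|rfl|rfl|rfl|rfl <;> rw [inner_pt] <;> nlinarith [hX2]
  · have hi : ⟪pt (8*Xc) (-13), center (3/4) 2 (-3)⟫ = 35 := by
      rw [center34, inner_pt]
      push_cast
      linear_combination 8 * hX2
    rw [hi]
    nlinarith [h11sq, sqrt11_pos]

/-- flipped version of a near bound -/
lemma flip_bound {a b a' b' : ℤ}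
    (H : ∀ {k1 k2 : Plane}, k1 ∈ hexK (3/4) → k2 ∈ hexK (3/4) →
      Real.sqrt 11 / 2 ≤ ‖center (3/4) a' b' + k1 - k2‖)
    (ha : a + a' = 0) (hb : b + b' = 0)
    {k1 k2 : Plane} (hk1 : k1 ∈ hexK (3/4)) (hk2 : k2 ∈ hexK (3/4)) :
    Real.sqrt 11 / 2 ≤ ‖center (3/4) a b + k1 - k2‖ := by
  rw [center34_neg a b a' b' ha hb,
    show -center (3/4) a' b' + k1 - k2 = -(center (3/4) a' b' + k2 - k1) by abel, norm_neg]
  exact H hk2 hk1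

end Aux

/-- with r = 3/4 and Λ = ⟨(4, -1), (2, 2)⟩ ≤ ℤ² of index 10,
the separation of the induced 10-colouring of the tiles T(i, j) equals the stated
value, and this value is attained. -/
theorem statement10 :
    (AddSubgroup.closure {(((4) : ℤ), ((-1) : ℤ)), (((2) : ℤ), ((2) : ℤ))}).index = 10 ∧
    IsLeast
      (sameColourDists (3 / 4)
        (AddSubgroup.closure {(((4) : ℤ), ((-1) : ℤ)), (((2) : ℤ), ((2) : ℤ))}))
      (Real.sqrt 11 / 2) := by
  constructor
  · rw [closure_eq, AddSubgroup.index_ker, AddMonoidHom.range_eq_top_of_surjective _ phi10_surj]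
    rw [Nat.card_congr (Equiv.subtypeUnivEquiv (by simp))]
    simp [Nat.card_eq_fintype_card]
  constructor
  · -- the value √11/2 is attained
    refine ⟨4, -1, 0, 0,
      center (3/4) 4 (-1) + pt (-Xc) (3/4/2),
      center (3/4) 0 0 + pt Xc (-(3/4/2)), by decide, ?_, ?_, ?_, ?_⟩
    · simp only [sub_zero]
      exact AddSubgroup.subset_closure (Set.mem_insert _ _)
    · exact ⟨pt (-Xc) (3/4/2), by rw [hexK34]; exact subset_convexHull ℝ _ (by simp [Vset]), rfl⟩
    · exact ⟨pt Xc (-(3/4/2)), by rw [hexK34]; exact subset_convexHull ℝ _ (by simp [Vset]), rfl⟩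
    · rw [dist_eq_norm, center34, center34, pt_add, pt_add, pt_sub, norm_pt]
      have key : ∀ u : ℝ, u = 11/4 → Real.sqrt 11 / 2 = Real.sqrt u := by
        rintro u rfl
        rw [show (11/4 : ℝ) = (Real.sqrt 11 / 2)^2 by
            rw [div_pow, h11sq]; norm_num,
          Real.sqrt_sq (by positivity)]
      apply key
      push_cast
      linear_combination 25 * hX2
  · -- lower bound
    rintro d ⟨i, j, i', j', p, q, hne, hmem, hp, hq, rfl⟩
    obtain ⟨k1, hk1, rfl⟩ := hp
    obtain ⟨k2, hk2, rfl⟩ := hq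
    have hre : dist ((fun p => center (3/4) i j + p) k1) ((fun p => center (3/4) i' j' + p) k2)
        = ‖center (3/4) (i-i') (j-j') + k1 - k2‖ := by
      simp only [dist_eq_norm]
      congr 1
      rw [← center34_sub]
      abel
    rw [hre]
    set a := i - i' with ha
    set b := j - j' with hb
    have h10 : (10:ℤ) ∣ a + 4*b := mem_closure_dvd hmem
    have hne' : ¬(a = 0 ∧ b = 0) := by
      rintro ⟨h1, h2⟩
      exact hne (by rw [Prod.mk.injEq]; omega)
    by_cases hA : a = 4 ∧ b = -1
    · rw [hA.1, hA.2]; exact case_A hk1 hk2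
    by_cases hA' : a = -4 ∧ b = 1
    · rw [hA'.1, hA'.2]
      exact flip_bound (fun h1 h2 => case_A h1 h2) (by norm_num) (by norm_num) hk1 hk2
    by_cases hB : a = 2 ∧ b = 2
    · rw [hB.1, hB.2]; exact case_B hk1 hk2
    by_cases hB' : a = -2 ∧ b = -2
    · rw [hB'.1, hB'.2]
      exact flip_bound (fun h1 h2 => case_B h1 h2) (by norm_num) (by norm_num) hk1 hk2
    by_cases hC : a = 2 ∧ b = -3
    · rw [hC.1, hC.2]; exact case_C hk1 hk2
    by_cases hC' : a = -2 ∧ b = 3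
    · rw [hC'.1, hC'.2]
      exact flip_bound (fun h1 h2 => case_C h1 h2) (by norm_num) (by norm_num) hk1 hk2
    -- far case
    have hint : (453:ℤ) ≤ 7*(2*a+b)^2 + 49*b^2 := intlem a b h10 hne' hA hA' hB hB' hC hC'
    have hcnorm : 1 + Real.sqrt 11 / 2 ≤ ‖center (3/4) a b‖ := by
      rw [center34, norm_pt]
      have hintR : (453:ℝ) ≤ 7*(2*(a:ℝ)+(b:ℝ))^2 + 49*(b:ℝ)^2 := by exact_mod_cast hint
      have h1 : (453:ℝ)/64 ≤ ((2*(a:ℝ)+(b:ℝ))*Xc)^2 + ((b:ℝ)*(7/8))^2 := by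
        nlinarith [hX2]
      calc 1 + Real.sqrt 11 / 2 ≤ Real.sqrt (453/64) := by
            rw [Real.le_sqrt (by positivity) (by positivity)]
            nlinarith [h11sq, sqrt11_pos]
        _ ≤ _ := Real.sqrt_le_sqrt h1
    have hk1n : ‖k1‖ ≤ 1/2 := hex_norm_le hk1
    have hk2n : ‖k2‖ ≤ 1/2 := hex_norm_le hk2
    have t1 : ‖center (3/4) a b + k1‖ - ‖k2‖ ≤ ‖center (3/4) a b + k1 - k2‖ :=
      norm_sub_norm_le _ _
    have t2 : ‖center (3/4) a b‖ ≤ ‖center (3/4) a b + k1‖ + ‖k1‖ := by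
      simpa using norm_sub_le (center (3/4) a b + k1) k1
    linarith
end

section
/- Take r = 11/31 (so x = √(1 − (11/31)²)/2, y = 11/62) and let Λ be the subgroup of ℤ² generated by (7, −4) and (3, 4), which has index 40 in ℤ². Then the separation of the induced 40-colouring of the tiles T(i, j) equals 137/31, and this value is attained. -/
/-! ### Auxiliary material for the proof -/

noncomputable section StatementFifteenAux

/-- The homomorphism ℤ² → ℤ/40 whose kernel is Λ = ⟨(7,−4),(3,4)⟩. -/
def s15phi : (ℤ × ℤ) →+ ZMod 40 where
  toFun p := (4 * p.1 + 7 * p.2 : ℤ)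
  map_zero' := by simp
  map_add' p q := by simp [Prod.fst_add, Prod.snd_add]; push_cast; ring

lemma s15_mem_extract {a b : ℤ}
    (h : (a, b) ∈ AddSubgroup.closure {(((7) : ℤ), ((-4) : ℤ)), (((3) : ℤ), ((4) : ℤ))}) :
    ∃ k t : ℤ, a = 10 * k - 7 * t ∧ b = 4 * t := by
  have key : ∀ (g : ℤ × ℤ),
      g ∈ AddSubgroup.closure {(((7) : ℤ), ((-4) : ℤ)), (((3) : ℤ), ((4) : ℤ))} →
      ∃ k t : ℤ, g.1 = 10 * k - 7 * t ∧ g.2 = 4 * t := by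
    intro g hg
    induction hg using AddSubgroup.closure_induction with
    | mem x hx =>
      rcases hx with rfl | rfl
      · exact ⟨0, -1, by norm_num, by norm_num⟩
      · exact ⟨1, 1, by norm_num, by norm_num⟩
    | zero => exact ⟨0, 0, by simp, by simp⟩
    | add x y hx hy ihx ihy =>
      obtain ⟨k, t, h1, h2⟩ := ihx
      obtain ⟨k', t', h3, h4⟩ := ihy
      exact ⟨k + k', t + t', by simp [Prod.fst_add, h1, h3]; ring,
        by simp [Prod.snd_add, h2, h4]; ring⟩
    | neg x hx ih =>
      obtain ⟨k, t, h1, h2⟩ := ih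
      exact ⟨-k, -t, by simp [h1]; ring, by simp [h2]⟩
  exact key (a, b) h

lemma s15_closure_eq_ker :
    AddSubgroup.closure {(((7) : ℤ), ((-4) : ℤ)), (((3) : ℤ), ((4) : ℤ))} = s15phi.ker := by
  apply le_antisymm
  · rw [AddSubgroup.closure_le]
    rintro x (rfl | rfl) <;> simp [s15phi, AddMonoidHom.mem_ker] <;> decide
  · rintro ⟨a, b⟩ hab
    have h0 : ((4 * a + 7 * b : ℤ) : ZMod 40) = 0 := hab
    rw [ZMod.intCast_zmod_eq_zero_iff_dvd] at h0
    obtain ⟨c, hc⟩ := h0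
    have h4 : (4 : ℤ) ∣ b := by omega
    obtain ⟨t, rfl⟩ := h4
    have : ((a, 4 * t) : ℤ × ℤ) = (c - t) • ((7 : ℤ), (-4 : ℤ)) + c • ((3 : ℤ), (4 : ℤ)) := by
      simp [Prod.ext_iff, smul_eq_mul]
      constructor <;> omega
    rw [this]
    exact add_mem (AddSubgroup.zsmul_mem _ (AddSubgroup.subset_closure (by simp)) _)
      (AddSubgroup.zsmul_mem _ (AddSubgroup.subset_closure (by simp)) _)

lemma s15_index_eq :
    (AddSubgroup.closure {(((7) : ℤ), ((-4) : ℤ)), (((3) : ℤ), ((4) : ℤ))}).index = 40 := by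
  rw [s15_closure_eq_ker, AddSubgroup.index_ker]
  have hsurj : Function.Surjective s15phi := by
    intro c
    refine ⟨((-5 : ℤ) * (c.val : ℤ), 3 * (c.val : ℤ)), ?_⟩
    show ((4 * (-5 * (c.val : ℤ)) + 7 * (3 * (c.val : ℤ)) : ℤ) : ZMod 40) = c
    have h : (4 * (-5 * (c.val : ℤ)) + 7 * (3 * (c.val : ℤ)) : ℤ) = (c.val : ℤ) := by ring
    rw [h, Int.cast_natCast, ZMod.natCast_val, ZMod.cast_id]
  rw [AddMonoidHom.range_eq_top.mpr hsurj]
  rw [Nat.card_congr (AddSubgroup.topEquiv.toEquiv), Nat.card_zmod]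

local notation "X" => Real.sqrt (1 - (11/31 : ℝ) ^ 2) / 2

lemma s15_hX2 : X ^ 2 = 210 / 961 := by
  rw [div_pow, Real.sq_sqrt (by norm_num : (0:ℝ) ≤ 1 - (11/31:ℝ)^2)]
  norm_num

lemma s15_hX0 : 0 < X := by positivity

lemma s15_hull_le (α β c : ℝ) (S : Set Plane) (hS : ∀ w ∈ S, α * w 0 + β * w 1 ≤ c) :
    ∀ v ∈ convexHull ℝ S, α * v 0 + β * v 1 ≤ c := by
  intro v hv
  have hlin : IsLinearMap ℝ (fun u : Plane => α * u 0 + β * u 1) := by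
    constructor
    · intro u w; simp [PiLp.add_apply]; ring
    · intro d u; simp [PiLp.smul_apply, smul_eq_mul]; ring
  exact convexHull_min hS (convex_halfSpace_le hlin c) hv

lemma s15_hexK_bounds {v : Plane} (hv : v ∈ hexK (11/31 : ℝ)) :
    |v 0| ≤ X ∧ |v 1| ≤ 1/2 ∧ |20 * v 0 + 62 * X * v 1| ≤ 31 * X ∧
      |20 * v 0 - 62 * X * v 1| ≤ 31 * X := by
  have hX := s15_hX0
  have key : ∀ α β c : ℝ,
      (∀ w ∈ ({pt 0 (1 / 2), pt X ((11:ℝ)/31 / 2), pt X (-((11:ℝ)/31 / 2)), pt 0 (-(1 / 2)),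
        pt (-X) (-((11:ℝ)/31 / 2)), pt (-X) ((11:ℝ)/31 / 2)} : Set Plane),
        α * w 0 + β * w 1 ≤ c) → α * v 0 + β * v 1 ≤ c := by
    intro α β c h
    exact s15_hull_le α β c _ h v hv
  refine ⟨abs_le.2 ⟨?_, ?_⟩, abs_le.2 ⟨?_, ?_⟩, abs_le.2 ⟨?_, ?_⟩, abs_le.2 ⟨?_, ?_⟩⟩
  · have := key (-1) 0 X (by rintro w (rfl|rfl|rfl|rfl|rfl|rfl) <;> simp [pt] <;> linarith)
    linarith
  · have := key 1 0 X (by rintro w (rfl|rfl|rfl|rfl|rfl|rfl) <;> simp [pt] <;> linarith)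
    linarith
  · have := key 0 (-1) (1/2) (by rintro w (rfl|rfl|rfl|rfl|rfl|rfl) <;> simp [pt] <;> norm_num)
    linarith
  · have := key 0 1 (1/2) (by rintro w (rfl|rfl|rfl|rfl|rfl|rfl) <;> simp [pt] <;> norm_num)
    linarith
  · have := key (-20) (-(62*X)) (31*X)
      (by rintro w (rfl|rfl|rfl|rfl|rfl|rfl) <;> simp [pt] <;> nlinarith)
    linarith
  · have := key 20 (62*X) (31*X)
      (by rintro w (rfl|rfl|rfl|rfl|rfl|rfl) <;> simp [pt] <;> nlinarith)
    linarith
  · have := key (-20) (62*X) (31*X)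
      (by rintro w (rfl|rfl|rfl|rfl|rfl|rfl) <;> simp [pt] <;> nlinarith)
    linarith
  · have := key 20 (-(62*X)) (31*X)
      (by rintro w (rfl|rfl|rfl|rfl|rfl|rfl) <;> simp [pt] <;> nlinarith)
    linarith

/-- The key inequality for the four tight lattice vectors. -/
lemma s15_hard (x e1 e2 : ℝ) (hx : 0 < x) (hx2 : x^2 = 210/961)
    (hA : -2*x ≤ e1) (hB : -(62*x) ≤ 20*e1 + 62*x*e2) :
    (137/31)^2 ≤ (10*x + e1)^2 + (84/31 + e2)^2 := by
  nlinarith [mul_nonneg hx.le (sq_nonneg (e1 + 2*x)), mul_nonneg hx.le (sq_nonneg (e2 + 11/31)),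
    mul_nonneg hx.le (by linarith : (0:ℝ) ≤ e1 + 2*x), sq_nonneg (e1 + 2*x),
    sq_nonneg (e2 + 11/31)]

lemma s15_abs_sub {a b : ℝ} : |a - b| ≤ |a| + |b| := by
  calc |a - b| = |a + -b| := by rw [sub_eq_add_neg]
  _ ≤ |a| + |-b| := abs_add_le _ _
  _ = |a| + |b| := by rw [abs_neg]

lemma s15_abs_lower {a e c : ℝ} (h : c + |e| ≤ |a|) : c ≤ |a + e| := by
  have h2 : |a| ≤ |a + e| + |e| := by
    calc |a| = |(a + e) + -e| := by ring_nf
    _ ≤ |a + e| + |-e| := abs_add_le _ _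
    _ = |a + e| + |e| := by rw [abs_neg]
  linarith

set_option maxHeartbeats 1000000 in
lemma s15_lower_bound :
    ∀ d ∈ sameColourDists (11 / 31)
      (AddSubgroup.closure {(((7) : ℤ), ((-4) : ℤ)), (((3) : ℤ), ((4) : ℤ))}),
      (137 : ℝ) / 31 ≤ d := by
  rintro d ⟨i, j, i', j', p, q, hne, hmem, hp, hq, rfl⟩
  obtain ⟨p₀, hp₀, rfl⟩ := hp
  obtain ⟨q₀, hq₀, rfl⟩ := hq
  obtain ⟨k, t, ha, hb⟩ := s15_mem_extract hmem
  obtain ⟨hp1, hp2, hp3, hp4⟩ := s15_hexK_bounds hp₀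
  obtain ⟨hq1, hq2, hq3, hq4⟩ := s15_hexK_bounds hq₀
  have hX := s15_hX0
  have hX2 := s15_hX2
  have hc1 : (center (11/31:ℝ) i j + p₀) 0 - (center (11/31:ℝ) i' j' + q₀) 0
      = 10*((2*k - t : ℤ):ℝ)*X + (p₀ 0 - q₀ 0) := by
    have h2 : 2*(i - i') + (j - j') = 10*(2*k - t) := by omega
    have h2r : (2*((i:ℝ) - (i':ℝ)) + ((j:ℝ) - (j':ℝ))) = 10*(2*(k:ℝ) - (t:ℝ)) := by
      exact_mod_cast h2
    have hint : (2*(i:ℝ) + j) - (2*(i':ℝ) + j') = 10*((2*k - t : ℤ):ℝ) := by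
      push_cast
      linarith
    simp only [PiLp.add_apply, center, pt, Matrix.cons_val_zero]
    linear_combination (Real.sqrt (1 - (11/31:ℝ)^2)/2) * hint
  have hc2 : (center (11/31:ℝ) i j + p₀) 1 - (center (11/31:ℝ) i' j' + q₀) 1
      = 84*(t:ℝ)/31 + (p₀ 1 - q₀ 1) := by
    have hint : (j:ℝ) - (j':ℝ) = 4*(t:ℝ) := by exact_mod_cast congrArg (Int.cast : ℤ → ℝ) hb
    simp only [PiLp.add_apply, center, pt, Matrix.cons_val_one, Matrix.head_cons, Matrix.cons_val_zero]
    linear_combination ((11:ℝ)/31/2 + 1/2) * hint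
  have hd : dist (center (11/31:ℝ) i j + p₀) (center (11/31:ℝ) i' j' + q₀)
      = Real.sqrt ((10*((2*k - t : ℤ):ℝ)*X + (p₀ 0 - q₀ 0))^2
          + (84*(t:ℝ)/31 + (p₀ 1 - q₀ 1))^2) := by
    rw [EuclideanSpace.dist_eq, Fin.sum_univ_two, Real.dist_eq, Real.dist_eq, sq_abs, sq_abs,
      hc1, hc2]
  rw [hd, Real.le_sqrt (by norm_num) (by positivity)]
  have he1 : |p₀ 0 - q₀ 0| ≤ 2*X := by
    have := s15_abs_sub (a := p₀ 0) (b := q₀ 0); linarith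
  have he2 : |p₀ 1 - q₀ 1| ≤ 1 := by
    have := s15_abs_sub (a := p₀ 1) (b := q₀ 1); linarith
  have hne0 : ¬(2*k - t = 0 ∧ t = 0) := by
    rintro ⟨h1, h2⟩
    exact hne (by rw [Prod.mk.injEq]; omega)
  have habs2 : ∀ m : ℤ, (2 ≤ m ∨ m ≤ -2) → (2:ℝ) ≤ |(m:ℝ)| := by
    rintro m (h | h)
    · exact le_abs.2 (Or.inl (by exact_mod_cast h))
    · refine le_abs.2 (Or.inr ?_)
      have : (m:ℝ) ≤ -2 := by exact_mod_cast h
      linarith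
  rcases (by omega : (2 ≤ 2*k - t ∨ 2*k - t ≤ -2) ∨ (2 ≤ t ∨ t ≤ -2) ∨
      ((2*k - t = 1 ∨ 2*k - t = -1) ∧ (t = 1 ∨ t = -1))) with hcs | hct | ⟨hs1, ht1⟩
  · -- |s| ≥ 2 : the first coordinate alone is large enough
    have hs' : (2:ℝ) ≤ |((2*k - t : ℤ):ℝ)| := habs2 _ hcs
    have h3 : 20*X ≤ |10*((2*k - t:ℤ):ℝ)*X| := by
      rw [abs_mul, abs_mul, abs_of_pos hX, (by norm_num : |(10:ℝ)| = 10)]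
      nlinarith [mul_le_mul_of_nonneg_right hs' hX.le]
    have h1 : 18*X ≤ |10*((2*k - t:ℤ):ℝ)*X + (p₀ 0 - q₀ 0)| :=
      s15_abs_lower (by linarith)
    have h4 : (18*X)^2 ≤ (10*((2*k - t:ℤ):ℝ)*X + (p₀ 0 - q₀ 0))^2 := by
      rw [← sq_abs (10*((2*k - t:ℤ):ℝ)*X + (p₀ 0 - q₀ 0))]
      exact pow_le_pow_left₀ (by positivity) h1 2
    linarith [h4, sq_nonneg (84*(t:ℝ)/31 + (p₀ 1 - q₀ 1)), hX2]
  · -- |t| ≥ 2 : the second coordinate alone is large enough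
    have ht' : (2:ℝ) ≤ |(t:ℝ)| := habs2 _ hct
    have h3 : 168/31 ≤ |84*(t:ℝ)/31| := by
      rw [(by ring : 84*(t:ℝ)/31 = (84/31) * t), abs_mul,
        (by norm_num : |(84:ℝ)/31| = 84/31)]
      linarith
    have h1 : (137:ℝ)/31 ≤ |84*(t:ℝ)/31 + (p₀ 1 - q₀ 1)| :=
      s15_abs_lower (by linarith)
    have h4 : ((137:ℝ)/31)^2 ≤ (84*(t:ℝ)/31 + (p₀ 1 - q₀ 1))^2 := by
      rw [← sq_abs (84*(t:ℝ)/31 + (p₀ 1 - q₀ 1))]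
      exact pow_le_pow_left₀ (by norm_num) h1 2
    linarith [h4, sq_nonneg (10*((2*k - t:ℤ):ℝ)*X + (p₀ 0 - q₀ 0))]
  · -- the four tight cases s = ±1, t = ±1
    have Hp1 := abs_le.1 hp1
    have Hq1 := abs_le.1 hq1
    have Hp3 := abs_le.1 hp3
    have Hq3 := abs_le.1 hq3
    have Hp4 := abs_le.1 hp4
    have Hq4 := abs_le.1 hq4
    rcases hs1 with hs | hs <;> rcases ht1 with ht | ht <;> rw [hs, ht] <;> push_cast
    · linarith [s15_hard X (p₀ 0 - q₀ 0) (p₀ 1 - q₀ 1) hX hX2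
        (by linarith [Hp1.1, Hq1.2]) (by linarith [Hp3.1, Hq3.2])]
    · linarith [s15_hard X (p₀ 0 - q₀ 0) (-(p₀ 1 - q₀ 1)) hX hX2
        (by linarith [Hp1.1, Hq1.2]) (by linarith [Hp4.1, Hq4.2])]
    · linarith [s15_hard X (-(p₀ 0 - q₀ 0)) (p₀ 1 - q₀ 1) hX hX2
        (by linarith [Hp1.2, Hq1.1]) (by linarith [Hp4.2, Hq4.1])]
    · linarith [s15_hard X (-(p₀ 0 - q₀ 0)) (-(p₀ 1 - q₀ 1)) hX hX2
        (by linarith [Hp1.2, Hq1.1]) (by linarith [Hp3.2, Hq3.1])]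

lemma s15_attained :
    (137 : ℝ) / 31 ∈ sameColourDists (11 / 31)
      (AddSubgroup.closure {(((7) : ℤ), ((-4) : ℤ)), (((3) : ℤ), ((4) : ℤ))}) := by
  refine ⟨4, -8, 0, 0, center (11/31) 4 (-8) + pt 0 (1/2), center (11/31) 0 0 + pt 0 (-(1/2)),
    by decide, ?_, ⟨pt 0 (1/2), ?_, rfl⟩, ⟨pt 0 (-(1/2)), ?_, rfl⟩, ?_⟩
  · have h : ((4 - 0, -8 - 0) : ℤ × ℤ) = ((7 : ℤ), (-4 : ℤ)) - ((3 : ℤ), (4 : ℤ)) := by decide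
    rw [h]
    exact sub_mem (AddSubgroup.subset_closure (by simp)) (AddSubgroup.subset_closure (by simp))
  · exact subset_convexHull ℝ _ (by norm_num [Set.mem_insert_iff])
  · exact subset_convexHull ℝ _ (by norm_num [Set.mem_insert_iff])
  · rw [EuclideanSpace.dist_eq, Fin.sum_univ_two]
    simp only [PiLp.add_apply, center, pt, Matrix.cons_val_zero, Matrix.cons_val_one,
      Matrix.head_cons, Real.dist_eq, sq_abs]
    norm_num

end StatementFifteenAux

/-- with r = 11/31 and Λ = ⟨(7, -4), (3, 4)⟩ ≤ ℤ² of index 40,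
the separation of the induced 40-colouring of the tiles T(i, j) equals the stated
value, and this value is attained. -/
theorem statement15 :
    (AddSubgroup.closure {(((7) : ℤ), ((-4) : ℤ)), (((3) : ℤ), ((4) : ℤ))}).index = 40 ∧
    IsLeast
      (sameColourDists (11 / 31)
        (AddSubgroup.closure {(((7) : ℤ), ((-4) : ℤ)), (((3) : ℤ), ((4) : ℤ))}))
      ((137 : ℝ) / 31) :=
  ⟨s15_index_eq, s15_attained, s15_lower_bound⟩
end

section
/- There exist a closed convex hexagon H ⊂ ℝ² of Euclidean diameter at most 1, a countable family of isometric copies of H whose union is all of ℝ² and whose interiors are pairwise disjoint (a tiling of the plane by congruent tiles), and a colouring of these tiles with 6 colours, such that any two distinct tiles of the same colour are at Euclidean distance at least 0.9920 from each other (i.e. dist(p, q) ≥ 0.9920 for all points p, q in the two tiles). This improves Ivanov's bound d(6) ≈ 0.991445. -/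
noncomputable section

open scoped RealInnerProductSpace

namespace St18

def pt (x y : ℝ) : Plane := (WithLp.equiv 2 (Fin 2 → ℝ)).symm ![x, y]

@[simp] lemma pt_0 (x y : ℝ) : pt x y 0 = x := rfl
@[simp] lemma pt_1 (x y : ℝ) : pt x y 1 = y := rfl
@[simp] lemma add_app (p q : Plane) (i : Fin 2) : (p + q) i = p i + q i := rfl
@[simp] lemma sub_app (p q : Plane) (i : Fin 2) : (p - q) i = p i - q i := rfl
@[simp] lemma smul_app (r : ℝ) (p : Plane) (i : Fin 2) : (r • p) i = r * p i := rfl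
@[simp] lemma zero_app (i : Fin 2) : (0 : Plane) i = 0 := rfl
@[simp] lemma neg_app (p : Plane) (i : Fin 2) : (-p) i = -(p i) := rfl

lemma inner_pt (p q : Plane) : ⟪p, q⟫ = p 0 * q 0 + p 1 * q 1 := by
  rw [PiLp.inner_apply, Fin.sum_univ_two]; simp [RCLike.inner_apply]; ring

lemma nsq_pt (p : Plane) : ‖p‖ ^ 2 = p 0 ^ 2 + p 1 ^ 2 := by
  rw [← real_inner_self_eq_norm_sq, inner_pt]; ring

lemma pext {p q : Plane} (h0 : p 0 = q 0) (h1 : p 1 = q 1) : p = q := by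
  ext i; fin_cases i
  · exact h0
  · exact h1

lemma sqle {a b : ℝ} (hb : 0 ≤ b) (h : a ^ 2 ≤ b ^ 2) (ha : 0 ≤ a) : a ≤ b := by nlinarith

/-- The lattice point `m • t1 + n • t2`. -/
def L (m n : ℤ) : Plane := pt (m * (9921/20000) + n * (-19/50)) (n * (2291/2500))

@[simp] lemma L_0 (m n : ℤ) : L m n 0 = m * (9921/20000) + n * (-19/50) := rfl
@[simp] lemma L_1 (m n : ℤ) : L m n 1 = n * (2291/2500) := rfl

lemma L_add (m n m' n' : ℤ) : L m n + L m' n' = L (m + m') (n + n') := by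
  apply pext <;> simp <;> push_cast <;> ring

lemma L_sub (m n m' n' : ℤ) : L m n - L m' n' = L (m - m') (n - n') := by
  apply pext <;> simp <;> push_cast <;> ring

lemma L_zero : L 0 0 = 0 := by apply pext <;> simp

lemma L_inj {m n m' n' : ℤ} (h : L m n = L m' n') : m = m' ∧ n = n' := by
  have h1 : (n : ℝ) * (2291/2500) = n' * (2291/2500) := by
    have := congrArg (fun z : Plane => z 1) h; simpa using this
  have hn : (n : ℝ) = n' := by
    field_simp at h1; exact_mod_cast h1
  have hn' : n = n' := by exact_mod_cast hn
  have h0 : (m : ℝ) * (9921/20000) + n * (-19/50) = m' * (9921/20000) + n' * (-19/50) := by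
    have := congrArg (fun z : Plane => z 0) h; simpa using this
  rw [hn] at h0
  have hm : (m : ℝ) = m' := by
    have : (m : ℝ) * (9921/20000) = m' * (9921/20000) := by linarith
    field_simp at this; exact_mod_cast this
  exact ⟨by exact_mod_cast hm, hn'⟩

/-- The six vertices of the hexagon. -/
def w : Fin 6 → Plane :=
  ![pt (9921/40000) (19892249/45820000),
    pt (-5279/40000) (22097199/45820000),
    pt (-9921/40000) (19892249/45820000),
    pt (-9921/40000) (-19892249/45820000),
    pt (5279/40000) (-22097199/45820000),
    pt (9921/40000) (-19892249/45820000)]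

@[simp] lemma wv0 : w 0 = pt (9921/40000) (19892249/45820000) := rfl
@[simp] lemma wv1 : w 1 = pt (-5279/40000) (22097199/45820000) := rfl
@[simp] lemma wv2 : w 2 = pt (-9921/40000) (19892249/45820000) := rfl
@[simp] lemma wv3 : w 3 = pt (-9921/40000) (-19892249/45820000) := rfl
@[simp] lemma wv4 : w 4 = pt (5279/40000) (-22097199/45820000) := rfl
@[simp] lemma wv5 : w 5 = pt (9921/40000) (-19892249/45820000) := rfl

/-- The hexagon. -/
def H : Set Plane := convexHull ℝ (Set.range w)

/-- The Voronoi cell of the lattice. -/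
def C : Set Plane := {y : Plane | ∀ m n : ℤ, ‖y‖ ≤ ‖y - L m n‖}

lemma wmem (i : Fin 6) : w i ∈ H := subset_convexHull ℝ _ (Set.mem_range_self i)

lemma fin6 {P : Fin 6 → Prop} (h0 : P 0) (h1 : P 1) (h2 : P 2) (h3 : P 3) (h4 : P 4)
    (h5 : P 5) : ∀ i, P i := by
  intro i
  fin_cases i
  exacts [h0, h1, h2, h3, h4, h5]

lemma wnsq : ∀ i : Fin 6, ‖w i‖^2 ≤ 1/4 := by
  refine fin6 ?_ ?_ ?_ ?_ ?_ ?_ <;> (rw [nsq_pt]; norm_num)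

lemma wnorm (i : Fin 6) : ‖w i‖ ≤ 1/2 :=
  sqle (by norm_num) (le_trans (wnsq i) (by norm_num)) (norm_nonneg _)

lemma zeroH : (0 : Plane) ∈ H := by
  have h := (convex_convexHull ℝ (Set.range w)) (wmem 0) (wmem 3)
    (by norm_num : (0:ℝ) ≤ 1/2) (by norm_num : (0:ℝ) ≤ 1/2) (by norm_num)
  have e : (1/2 : ℝ) • w 0 + (1/2 : ℝ) • w 3 = (0 : Plane) := by
    apply pext <;> simp <;> norm_num
  rwa [e] at h

lemma H_ball : ∀ p ∈ H, ‖p‖ ≤ 1/2 := by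
  intro p hp
  have : H ⊆ Metric.closedBall (0 : Plane) (1/2) := by
    apply convexHull_min ?_ (convex_closedBall _ _)
    rintro x ⟨i, rfl⟩
    simpa [Metric.mem_closedBall, dist_eq_norm] using wnorm i
  simpa [Metric.mem_closedBall, dist_eq_norm] using this hp

lemma Qlb (m n : ℤ) : (1/5) * ((m:ℝ)^2 + (n:ℝ)^2) ≤ ‖L m n‖^2 := by
  rw [nsq_pt]
  simp only [L_0, L_1]
  nlinarith [sq_nonneg ((18426241:ℝ)*m - 75399600*n), sq_nonneg ((m:ℝ)), sq_nonneg ((n:ℝ))]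

lemma Q2lb (k l : ℤ) : (8/5) * ((k:ℝ)^2 + (l:ℝ)^2) ≤ ‖L (3*k) (2*l)‖^2 := by
  rw [nsq_pt]
  simp only [L_0, L_1]
  push_cast
  nlinarith [sq_nonneg ((245836169:ℝ)*k - 452397600*l), sq_nonneg ((k:ℝ)), sq_nonneg ((l:ℝ))]

lemma vert_ok {m n : ℤ} (h1 : (1:ℝ) ≤ ‖L m n‖^2) (i : Fin 6) :
    2 * ⟪w i, L m n⟫ ≤ ‖L m n‖^2 := by
  have hL1 : (1:ℝ) ≤ ‖L m n‖ := sqle (norm_nonneg _) (by nlinarith) (by norm_num)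
  have hc : ⟪w i, L m n⟫ ≤ ‖w i‖ * ‖L m n‖ := real_inner_le_norm _ _
  have hw := wnorm i
  nlinarith [norm_nonneg (L m n)]

lemma allvert (m n : ℤ) : ∀ i : Fin 6, 2 * ⟪w i, L m n⟫ ≤ ‖L m n‖^2 := by
  by_cases hbig : 5 ≤ m^2 + n^2
  · intro i
    apply vert_ok ?_ i
    have := Qlb m n
    have hc : (5:ℝ) ≤ (m:ℝ)^2 + (n:ℝ)^2 := by exact_mod_cast hbig
    linarith
  · have hm1 : -2 ≤ m := by nlinarith
    have hm2 : m ≤ 2 := by nlinarith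
    have hn1 : -2 ≤ n := by nlinarith
    have hn2 : n ≤ 2 := by nlinarith
    interval_cases m <;> interval_cases n <;>
      first
        | (intro i; refine vert_ok ?_ i; rw [nsq_pt]; push_cast; norm_num; done)
        | (refine fin6 ?_ ?_ ?_ ?_ ?_ ?_ <;> (rw [inner_pt, nsq_pt]; push_cast; norm_num))

lemma H_subset_C : H ⊆ C := by
  intro p hp m n
  suffices hs : 2 * ⟪p, L m n⟫ ≤ ‖L m n‖^2 by
    have expand : ‖p - L m n‖^2 = ‖p‖^2 - 2 * ⟪p, L m n⟫ + ‖L m n‖^2 := norm_sub_sq_real _ _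
    apply sqle (norm_nonneg _) ?_ (norm_nonneg _)
    rw [expand]; linarith
  have hcvx : Convex ℝ {x : Plane | 2 * ⟪x, L m n⟫ ≤ ‖L m n‖^2} := by
    apply convex_halfSpace_le
    exact ⟨fun x y => by rw [inner_add_left]; ring,
           fun cc x => by rw [real_inner_smul_left, smul_eq_mul]; ring⟩
  exact convexHull_min (by rintro x ⟨i, rfl⟩; exact allvert m n i) hcvx hp

lemma combo3 {K : Set Plane} (hK : Convex ℝ K) {p q r x : Plane} (hp : p ∈ K) (hq : q ∈ K)
    (hr : r ∈ K) {a b c : ℝ} (ha : 0 ≤ a) (hb : 0 ≤ b) (hc : 0 ≤ c) (habc : a + b + c = 1)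
    (hx : x = a • p + b • q + c • r) : x ∈ K := by
  rcases eq_or_lt_of_le (add_nonneg ha hb) with hs | hs
  · have ha0 : a = 0 := by linarith
    have hb0 : b = 0 := by linarith
    have hc1 : c = 1 := by linarith
    rw [hx, ha0, hb0, hc1]; simpa using hr
  · have hy : (a/(a+b)) • p + (b/(a+b)) • q ∈ K := by
      apply hK hp hq (div_nonneg ha (le_of_lt hs)) (div_nonneg hb (le_of_lt hs))
      field_simp
    have hxx : x = (a+b) • ((a/(a+b)) • p + (b/(a+b)) • q) + c • r := by
      rw [hx, smul_add, smul_smul, smul_smul]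
      rw [mul_div_cancel₀ _ (ne_of_gt hs), mul_div_cancel₀ _ (ne_of_gt hs)]
    rw [hxx]
    exact hK hy hr (le_of_lt hs) hc (by linarith)

lemma half {y : Plane} (m n : ℤ) (h : ‖y‖ ≤ ‖y - L m n‖) :
    2 * (y 0 * L m n 0 + y 1 * L m n 1) ≤ L m n 0 ^ 2 + L m n 1 ^ 2 := by
  have h2 : ‖y‖^2 ≤ ‖y - L m n‖^2 := by
    have := pow_le_pow_left₀ (norm_nonneg y) h 2
    exact this
  rw [nsq_pt, nsq_pt] at h2
  simp only [sub_app] at h2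
  nlinarith [h2]

set_option maxHeartbeats 2000000 in
lemma C_subset_H : C ⊆ H := by
  intro y hy
  have h110 := half 1 1 (hy 1 1)
  have h010 := half 0 1 (hy 0 1)
  have hm10 := half (-1) 0 (hy (-1) 0)
  have hmm0 := half (-1) (-1) (hy (-1) (-1))
  have h0m0 := half 0 (-1) (hy 0 (-1))
  have h100 := half 1 0 (hy 1 0)
  simp only [L_0, L_1] at h110 h010 hm10 hmm0 h0m0 h100
  push_cast at h110 h010 hm10 hmm0 h0m0 h100
  have hcvx := convex_convexHull ℝ (Set.range w)
  by_cases c0 : 0 ≤ (9921/40000 : ℝ) * y 1 - (19892249/45820000 : ℝ) * y 0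
  · by_cases c1 : 0 ≤ (-5279/40000 : ℝ) * y 1 - (22097199/45820000 : ℝ) * y 0
    · by_cases c2 : 0 ≤ (-9921/40000 : ℝ) * y 1 - (19892249/45820000 : ℝ) * y 0
      · -- sector 2
        exact combo3 hcvx (wmem 2) (wmem 3) zeroH
          (a := (-20000/9921 : ℝ) * y 0 + (22910000/19892249 : ℝ) * y 1) (b := (-20000/9921 : ℝ) * y 0 + (-22910000/19892249 : ℝ) * y 1)
          (c := 1 - ((-20000/9921 : ℝ) * y 0 + (22910000/19892249 : ℝ) * y 1) - ((-20000/9921 : ℝ) * y 0 + (-22910000/19892249 : ℝ) * y 1))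
          (by linarith) (by linarith) (by linarith) (by ring)
          (by apply pext <;> (simp only [add_app, smul_app, zero_app, wv0, wv1, wv2, wv3, wv4, wv5, pt_0, pt_1]; ring))
      · -- sector 1
        exact combo3 hcvx (wmem 1) (wmem 2) zeroH
          (a := (99461245000/14276891101 : ℝ) * y 0 + (56822527500/14276891101 : ℝ) * y 1) (b := (-110485995000/14276891101 : ℝ) * y 0 + (-30235472500/14276891101 : ℝ) * y 1)
          (c := 1 - ((99461245000/14276891101 : ℝ) * y 0 + (56822527500/14276891101 : ℝ) * y 1) - ((-110485995000/14276891101 : ℝ) * y 0 + (-30235472500/14276891101 : ℝ) * y 1))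
          (by linarith) (by linarith) (by linarith) (by ring)
          (by apply pext <;> (simp only [add_app, smul_app, zero_app, wv0, wv1, wv2, wv3, wv4, wv5, pt_0, pt_1]; ring))
    · -- sector 0
      exact combo3 hcvx (wmem 0) (wmem 1) zeroH
        (a := (707110368/259389995 : ℝ) * y 0 + (193507024/259389995 : ℝ) * y 1) (b := (-636551968/259389995 : ℝ) * y 0 + (363664176/259389995 : ℝ) * y 1)
        (c := 1 - ((707110368/259389995 : ℝ) * y 0 + (193507024/259389995 : ℝ) * y 1) - ((-636551968/259389995 : ℝ) * y 0 + (363664176/259389995 : ℝ) * y 1))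
        (by linarith) (by linarith) (by linarith) (by ring)
        (by apply pext <;> (simp only [add_app, smul_app, zero_app, wv0, wv1, wv2, wv3, wv4, wv5, pt_0, pt_1]; ring))
  · by_cases c1 : 0 ≤ (-5279/40000 : ℝ) * y 1 - (22097199/45820000 : ℝ) * y 0
    · -- sector 3
      exact combo3 hcvx (wmem 3) (wmem 4) zeroH
        (a := (-707110368/259389995 : ℝ) * y 0 + (-193507024/259389995 : ℝ) * y 1) (b := (636551968/259389995 : ℝ) * y 0 + (-363664176/259389995 : ℝ) * y 1)
        (c := 1 - ((-707110368/259389995 : ℝ) * y 0 + (-193507024/259389995 : ℝ) * y 1) - ((636551968/259389995 : ℝ) * y 0 + (-363664176/259389995 : ℝ) * y 1))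
        (by linarith) (by linarith) (by linarith) (by ring)
        (by apply pext <;> (simp only [add_app, smul_app, zero_app, wv0, wv1, wv2, wv3, wv4, wv5, pt_0, pt_1]; ring))
    · by_cases c2 : 0 ≤ (-9921/40000 : ℝ) * y 1 - (19892249/45820000 : ℝ) * y 0
      · -- sector 4
        exact combo3 hcvx (wmem 4) (wmem 5) zeroH
          (a := (-99461245000/14276891101 : ℝ) * y 0 + (-56822527500/14276891101 : ℝ) * y 1) (b := (110485995000/14276891101 : ℝ) * y 0 + (30235472500/14276891101 : ℝ) * y 1)
          (c := 1 - ((-99461245000/14276891101 : ℝ) * y 0 + (-56822527500/14276891101 : ℝ) * y 1) - ((110485995000/14276891101 : ℝ) * y 0 + (30235472500/14276891101 : ℝ) * y 1))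
          (by linarith) (by linarith) (by linarith) (by ring)
          (by apply pext <;> (simp only [add_app, smul_app, zero_app, wv0, wv1, wv2, wv3, wv4, wv5, pt_0, pt_1]; ring))
      · -- sector 5
        exact combo3 hcvx (wmem 5) (wmem 0) zeroH
          (a := (20000/9921 : ℝ) * y 0 + (-22910000/19892249 : ℝ) * y 1) (b := (20000/9921 : ℝ) * y 0 + (22910000/19892249 : ℝ) * y 1)
          (c := 1 - ((20000/9921 : ℝ) * y 0 + (-22910000/19892249 : ℝ) * y 1) - ((20000/9921 : ℝ) * y 0 + (22910000/19892249 : ℝ) * y 1))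
          (by linarith) (by linarith) (by linarith) (by ring)
          (by apply pext <;> (simp only [add_app, smul_app, zero_app, wv0, wv1, wv2, wv3, wv4, wv5, pt_0, pt_1]; ring))


lemma C_ineq {y : Plane} (hy : y ∈ C) (m n : ℤ) : 2 * ⟪y, L m n⟫ ≤ ‖L m n‖^2 := by
  have h := hy m n
  have h2 : ‖y‖^2 ≤ ‖y - L m n‖^2 := pow_le_pow_left₀ (norm_nonneg y) h 2
  have expand : ‖y - L m n‖^2 = ‖y‖^2 - 2 * ⟪y, L m n⟫ + ‖L m n‖^2 := norm_sub_sq_real _ _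
  linarith

lemma cover (x : Plane) : ∃ m n : ℤ, x - L m n ∈ C := by
  obtain ⟨B, hB1, hB5⟩ : ∃ B : ℤ, 1 ≤ B ∧ 5 * ‖x‖ ≤ B := by
    refine ⟨⌈5 * ‖x‖⌉ + 1, ?_, ?_⟩
    · have h0 : (0:ℝ) ≤ 5 * ‖x‖ := by positivity
      have := Int.ceil_nonneg h0
      omega
    · have := Int.le_ceil (5 * ‖x‖)
      push_cast
      linarith
  have hB1r : (1:ℝ) ≤ B := by exact_mod_cast hB1
  set F := (Finset.Icc (-B) B) ×ˢ (Finset.Icc (-B) B) with hF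
  have h00 : ((0,0) : ℤ × ℤ) ∈ F := by
    simp only [hF, Finset.mem_product, Finset.mem_Icc]
    omega
  obtain ⟨p0, hp0, hmin⟩ := F.exists_min_image (fun p => ‖x - L p.1 p.2‖) ⟨(0,0), h00⟩
  have hmin' : ∀ u v : ℤ, -B ≤ u → u ≤ B → -B ≤ v → v ≤ B →
      ‖x - L p0.1 p0.2‖ ≤ ‖x - L u v‖ := by
    intro u v h1 h2 h3 h4
    exact hmin (u, v) (by simp only [hF, Finset.mem_product, Finset.mem_Icc]; exact ⟨⟨h1, h2⟩, h3, h4⟩)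
  refine ⟨p0.1, p0.2, ?_⟩
  intro m n
  have key : x - L p0.1 p0.2 - L m n = x - L (p0.1 + m) (p0.2 + n) := by
    rw [← L_add]; abel
  rw [key]
  by_cases hin : -B ≤ p0.1 + m ∧ p0.1 + m ≤ B ∧ -B ≤ p0.2 + n ∧ p0.2 + n ≤ B
  · exact hmin' _ _ hin.1 hin.2.1 hin.2.2.1 hin.2.2.2
  · have h0 : ‖x - L p0.1 p0.2‖ ≤ ‖x‖ := by
      have := hmin' 0 0 (by omega) (by omega) (by omega) (by omega)
      simpa [L_zero] using this
    have hcase : B < p0.1 + m ∨ p0.1 + m < -B ∨ B < p0.2 + n ∨ p0.2 + n < -B := by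
      omega
    have hcoord : (B:ℝ)^2 ≤ ((p0.1 + m : ℤ):ℝ)^2 + ((p0.2 + n : ℤ):ℝ)^2 := by
      rcases hcase with h | h | h | h
      · have h' : (B:ℝ) < ((p0.1 + m : ℤ):ℝ) := by exact_mod_cast h
        nlinarith [sq_nonneg (((p0.2 + n : ℤ)):ℝ)]
      · have h' : ((p0.1 + m : ℤ):ℝ) < -(B:ℝ) := by exact_mod_cast h
        nlinarith [sq_nonneg (((p0.2 + n : ℤ)):ℝ)]
      · have h' : (B:ℝ) < ((p0.2 + n : ℤ):ℝ) := by exact_mod_cast h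
        nlinarith [sq_nonneg (((p0.1 + m : ℤ)):ℝ)]
      · have h' : ((p0.2 + n : ℤ):ℝ) < -(B:ℝ) := by exact_mod_cast h
        nlinarith [sq_nonneg (((p0.1 + m : ℤ)):ℝ)]
    have hq := Qlb (p0.1 + m) (p0.2 + n)
    have hL2 : 4 * ‖x‖^2 ≤ ‖L (p0.1 + m) (p0.2 + n)‖^2 := by
      nlinarith [mul_nonneg (by linarith : (0:ℝ) ≤ (B:ℝ) - 5*‖x‖)
        (by positivity : (0:ℝ) ≤ (B:ℝ) + 5*‖x‖)]
    have hL : 2 * ‖x‖ ≤ ‖L (p0.1 + m) (p0.2 + n)‖ := by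
      apply sqle (norm_nonneg _) ?_ (by positivity)
      nlinarith
    have htri : ‖L (p0.1 + m) (p0.2 + n)‖ - ‖x‖ ≤ ‖x - L (p0.1 + m) (p0.2 + n)‖ := by
      have := norm_sub_norm_le (L (p0.1 + m) (p0.2 + n)) x
      calc ‖L (p0.1 + m) (p0.2 + n)‖ - ‖x‖ ≤ ‖L (p0.1 + m) (p0.2 + n) - x‖ := this
        _ = ‖x - L (p0.1 + m) (p0.2 + n)‖ := norm_sub_rev _ _
    linarith

def e6 : ℕ ≃ ℤ × ℤ := (Denumerable.eqv (ℤ × ℤ)).symm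

def c6 : ℤ × ℤ → Fin 6 := fun p => ⟨(p.1 % 3 + 3 * (p.2 % 2)).toNat, by omega⟩

lemma c6_eq {p q : ℤ × ℤ} (h : c6 p = c6 q) : 3 ∣ p.1 - q.1 ∧ 2 ∣ p.2 - q.2 := by
  have := congrArg (fun x : Fin 6 => (x : ℕ)) h
  simp only [c6] at this
  omega

def lam (n : ℕ) : Plane := L (e6 n).1 (e6 n).2

def T (n : ℕ) : Set Plane := ⇑(IsometryEquiv.addLeft (lam n)) '' H

lemma memT {n : ℕ} {z : Plane} : z ∈ T n ↔ ∃ h ∈ H, lam n + h = z := by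
  constructor
  · rintro ⟨h, hh, rfl⟩
    exact ⟨h, hh, rfl⟩
  · rintro ⟨h, hh, rfl⟩
    exact ⟨h, hh, rfl⟩

lemma T_cover : (⋃ n : ℕ, T n) = Set.univ := by
  ext x
  simp only [Set.mem_iUnion, Set.mem_univ, iff_true]
  obtain ⟨m, n, hC⟩ := cover x
  refine ⟨e6.symm (m, n), memT.2 ⟨x - L m n, C_subset_H hC, ?_⟩⟩
  have he : lam (e6.symm (m, n)) = L m n := by
    simp [lam, Equiv.apply_symm_apply]
  rw [he]; abel

lemma T_sub (n : ℕ) (m' n' : ℤ) :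
    T n ⊆ {z : Plane | 2 * ⟪z - lam n, L m' n'⟫ ≤ ‖L m' n'‖^2} := by
  rintro z hz
  obtain ⟨h, hh, rfl⟩ := memT.1 hz
  have : lam n + h - lam n = h := by abel
  rw [Set.mem_setOf_eq, this]
  exact C_ineq (H_subset_C hh) m' n'

lemma L_neg (p q : ℤ) : L (-p) (-q) = -L p q := by
  apply pext <;> simp <;> push_cast <;> ring

lemma strictHalf {k : ℕ} {x : Plane} (hx : x ∈ interior (T k)) (p q : ℤ)
    (hne0 : L p q ≠ 0) : 2 * ⟪x - lam k, L p q⟫ < ‖L p q‖^2 := by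
  obtain ⟨ε, hε, hball⟩ := Metric.isOpen_iff.1 isOpen_interior x hx
  have hgn : 0 < ‖L p q‖ := norm_pos_iff.2 hne0
  set u : Plane := ‖L p q‖⁻¹ • L p q with hu
  have hun : ‖u‖ = 1 := by
    rw [hu, norm_smul, Real.norm_eq_abs, abs_of_nonneg (by positivity)]
    field_simp
  have hx' : x + (ε/2) • u ∈ T k := by
    apply interior_subset
    apply hball
    rw [Metric.mem_ball, dist_eq_norm]
    have : x + (ε/2) • u - x = (ε/2) • u := by abel
    rw [this, norm_smul, hun, Real.norm_eq_abs, abs_of_nonneg (by linarith)]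
    linarith
  have hhalf := T_sub k p q hx'
  rw [Set.mem_setOf_eq] at hhalf
  have hexp : x + (ε/2) • u - lam k = (x - lam k) + (ε/2) • u := by abel
  rw [hexp, inner_add_left, real_inner_smul_left] at hhalf
  have huL : ⟪u, L p q⟫ = ‖L p q‖ := by
    rw [hu, real_inner_smul_left, real_inner_self_eq_norm_sq]
    field_simp
  rw [huL] at hhalf
  nlinarith

lemma lam_inj {n m : ℕ} (h : lam n = lam m) : n = m := by
  have h2 := L_inj h
  apply e6.injective
  exact Prod.ext h2.1 h2.2

lemma T_disj (n m : ℕ) (hnm : n ≠ m) : interior (T n) ∩ interior (T m) = ∅ := by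
  rw [Set.eq_empty_iff_forall_notMem]
  rintro x ⟨hxn, hxm⟩
  set p : ℤ := (e6 m).1 - (e6 n).1 with hp
  set q : ℤ := (e6 m).2 - (e6 n).2 with hq
  have hg : L p q = lam m - lam n := (L_sub _ _ _ _).symm
  have hne0 : L p q ≠ 0 := by
    intro h0
    apply hnm
    apply lam_inj
    have : lam m - lam n = 0 := by rw [← hg, h0]
    have := sub_eq_zero.1 this
    exact this.symm
  have h1 := strictHalf hxn p q hne0
  have h2 := strictHalf hxm (-p) (-q) (by rw [L_neg]; exact neg_ne_zero.2 hne0)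
  rw [L_neg, inner_neg_right, norm_neg] at h2
  have hsplit : ⟪x - lam n, L p q⟫ - ⟪x - lam m, L p q⟫ = ⟪lam m - lam n, L p q⟫ := by
    rw [← inner_sub_left]
    congr 1
    abel
  have hgg : ⟪lam m - lam n, L p q⟫ = ‖L p q‖^2 := by
    rw [← hg, real_inner_self_eq_norm_sq]
  nlinarith

lemma inner_hull_le (ν : Plane) (Mx : ℝ) (hM : ∀ i, ⟪ν, w i⟫ ≤ Mx) :
    ∀ h ∈ H, ⟪ν, h⟫ ≤ Mx := by
  intro h hh
  have hcvx : Convex ℝ {x : Plane | ⟪ν, x⟫ ≤ Mx} :=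
    convex_halfSpace_le ⟨fun a b => inner_add_right _ _ _,
      fun r a => by rw [real_inner_smul_right, smul_eq_mul]⟩ _
  exact convexHull_min (by rintro z ⟨i, rfl⟩; exact hM i) hcvx hh

lemma inner_hull_ge (ν : Plane) (Mx : ℝ) (hm : ∀ i, -Mx ≤ ⟪ν, w i⟫) :
    ∀ h ∈ H, -Mx ≤ ⟪ν, h⟫ := by
  intro h hh
  have hcvx : Convex ℝ {x : Plane | -Mx ≤ ⟪ν, x⟫} :=
    convex_halfSpace_ge ⟨fun a b => inner_add_right _ _ _,
      fun r a => by rw [real_inner_smul_right, smul_eq_mul]⟩ _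
  exact convexHull_min (by rintro z ⟨i, rfl⟩; exact hm i) hcvx hh

lemma certL (ν tt : Plane) (Mx s : ℝ) (hM : ∀ i, ⟪ν, w i⟫ ≤ Mx) (hm : ∀ i, -Mx ≤ ⟪ν, w i⟫)
    (hs : ‖ν‖ ≤ s) (hs0 : 0 < ‖ν‖) (hkey : (124/125) * s + 2 * Mx ≤ ⟪ν, tt⟫) :
    ∀ h1 ∈ H, ∀ h2 ∈ H, (124/125 : ℝ) ≤ ‖h1 - h2 + tt‖ := by
  intro h1 hh1 h2 hh2
  have e1 : ⟪ν, h1 - h2 + tt⟫ = ⟪ν, h1⟫ - ⟪ν, h2⟫ + ⟪ν, tt⟫ := by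
    rw [inner_add_right, inner_sub_right]
  have i1 := inner_hull_ge ν Mx hm h1 hh1
  have i2 := inner_hull_le ν Mx hM h2 hh2
  have hz : (124/125) * ‖ν‖ ≤ ⟪ν, h1 - h2 + tt⟫ := by
    have hmul : (124/125) * ‖ν‖ ≤ (124/125) * s := by
      apply mul_le_mul_of_nonneg_left hs (by norm_num)
    linarith
  have hub := real_inner_le_norm ν (h1 - h2 + tt)
  have hchain : ‖ν‖ * (124/125) ≤ ‖ν‖ * ‖h1 - h2 + tt‖ := by
    calc ‖ν‖ * (124/125) = (124/125) * ‖ν‖ := by ring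
      _ ≤ ⟪ν, h1 - h2 + tt⟫ := hz
      _ ≤ ‖ν‖ * ‖h1 - h2 + tt‖ := hub
  exact le_of_mul_le_mul_left hchain hs0

lemma reach (M N : ℤ) (h : (1992/1000:ℝ)^2 ≤ ‖L M N‖^2) :
    ∀ h1 ∈ H, ∀ h2 ∈ H, (124/125 : ℝ) ≤ ‖h1 - h2 + L M N‖ := by
  intro h1 hh1 h2 hh2
  have hL : (1992/1000:ℝ) ≤ ‖L M N‖ := sqle (norm_nonneg _) h (by norm_num)
  have b1 := H_ball h1 hh1
  have b2 := H_ball h2 hh2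
  have t1 : ‖L M N‖ ≤ ‖h1 - h2 + L M N‖ + ‖h1 - h2‖ := by
    have heq : L M N = (h1 - h2 + L M N) - (h1 - h2) := by abel
    calc ‖L M N‖ = ‖(h1 - h2 + L M N) - (h1 - h2)‖ := by rw [← heq]
      _ ≤ ‖h1 - h2 + L M N‖ + ‖h1 - h2‖ := norm_sub_le _ _
  have t2 : ‖h1 - h2‖ ≤ ‖h1‖ + ‖h2‖ := norm_sub_le _ _
  linarith

lemma dlb (k l : ℤ) (hkl : ¬(k = 0 ∧ l = 0)) :
    ∀ h1 ∈ H, ∀ h2 ∈ H, (124/125 : ℝ) ≤ ‖h1 - h2 + L (3*k) (2*l)‖ := by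
  by_cases hbig : 3 ≤ k^2 + l^2
  · apply reach
    have hq := Q2lb k l
    have hc : (3:ℝ) ≤ (k:ℝ)^2 + (l:ℝ)^2 := by exact_mod_cast hbig
    nlinarith
  · have hk1 : -1 ≤ k := by nlinarith
    have hk2 : k ≤ 1 := by nlinarith
    have hl1 : -1 ≤ l := by nlinarith
    have hl2 : l ≤ 1 := by nlinarith
    interval_cases k <;> interval_cases l
    · -- (-1, -1)
      exact certL (pt (-2321/10000) (-24113/25000)) (L (3 * (-1)) (2 * (-1))) (2182417373203/4582000000000) (198411/200000)
        (fin6 (by rw [inner_pt]; norm_num) (by rw [inner_pt]; norm_num) (by rw [inner_pt]; norm_num) (by rw [inner_pt]; norm_num) (by rw [inner_pt]; norm_num) (by rw [inner_pt]; norm_num))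
        (fin6 (by rw [inner_pt]; norm_num) (by rw [inner_pt]; norm_num) (by rw [inner_pt]; norm_num) (by rw [inner_pt]; norm_num) (by rw [inner_pt]; norm_num) (by rw [inner_pt]; norm_num))
        (by apply sqle (by norm_num) ?_ (norm_nonneg _); rw [nsq_pt]; norm_num)
        (by have h := nsq_pt (pt (-2321/10000) (-24113/25000)); norm_num at h; nlinarith [norm_nonneg (pt (-2321/10000) (-24113/25000))])
        (by rw [inner_pt]; push_cast; norm_num)
    · -- (-1, 0)
      exact certL (pt (-9921/10000) (0)) (L (3 * (-1)) (2 * (0))) (98426241/400000000) (496051/500000)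
        (fin6 (by rw [inner_pt]; norm_num) (by rw [inner_pt]; norm_num) (by rw [inner_pt]; norm_num) (by rw [inner_pt]; norm_num) (by rw [inner_pt]; norm_num) (by rw [inner_pt]; norm_num))
        (fin6 (by rw [inner_pt]; norm_num) (by rw [inner_pt]; norm_num) (by rw [inner_pt]; norm_num) (by rw [inner_pt]; norm_num) (by rw [inner_pt]; norm_num) (by rw [inner_pt]; norm_num))
        (by apply sqle (by norm_num) ?_ (norm_nonneg _); rw [nsq_pt]; norm_num)
        (by have h := nsq_pt (pt (-9921/10000) (0)); norm_num at h; nlinarith [norm_nonneg (pt (-9921/10000) (0))])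
        (by rw [inner_pt]; push_cast; norm_num)
    · -- (-1, 1)
      refine reach _ _ ?_
      rw [nsq_pt]; push_cast; norm_num
    · -- (0, -1)
      exact certL (pt (19/50) (-2291/2500)) (L (3 * (0)) (2 * (-1))) (6151181/12500000) (198413/200000)
        (fin6 (by rw [inner_pt]; norm_num) (by rw [inner_pt]; norm_num) (by rw [inner_pt]; norm_num) (by rw [inner_pt]; norm_num) (by rw [inner_pt]; norm_num) (by rw [inner_pt]; norm_num))
        (fin6 (by rw [inner_pt]; norm_num) (by rw [inner_pt]; norm_num) (by rw [inner_pt]; norm_num) (by rw [inner_pt]; norm_num) (by rw [inner_pt]; norm_num) (by rw [inner_pt]; norm_num))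
        (by apply sqle (by norm_num) ?_ (norm_nonneg _); rw [nsq_pt]; norm_num)
        (by have h := nsq_pt (pt (19/50) (-2291/2500)); norm_num at h; nlinarith [norm_nonneg (pt (19/50) (-2291/2500))])
        (by rw [inner_pt]; push_cast; norm_num)
    · -- (0, 0)
      exact absurd ⟨rfl, rfl⟩ hkl
    · -- (0, 1)
      exact certL (pt (-19/50) (2291/2500)) (L (3 * (0)) (2 * (1))) (6151181/12500000) (198413/200000)
        (fin6 (by rw [inner_pt]; norm_num) (by rw [inner_pt]; norm_num) (by rw [inner_pt]; norm_num) (by rw [inner_pt]; norm_num) (by rw [inner_pt]; norm_num) (by rw [inner_pt]; norm_num))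
        (fin6 (by rw [inner_pt]; norm_num) (by rw [inner_pt]; norm_num) (by rw [inner_pt]; norm_num) (by rw [inner_pt]; norm_num) (by rw [inner_pt]; norm_num) (by rw [inner_pt]; norm_num))
        (by apply sqle (by norm_num) ?_ (norm_nonneg _); rw [nsq_pt]; norm_num)
        (by have h := nsq_pt (pt (-19/50) (2291/2500)); norm_num at h; nlinarith [norm_nonneg (pt (-19/50) (2291/2500))])
        (by rw [inner_pt]; push_cast; norm_num)
    · -- (1, -1)
      refine reach _ _ ?_
      rw [nsq_pt]; push_cast; norm_num
    · -- (1, 0)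
      exact certL (pt (9921/10000) (0)) (L (3 * (1)) (2 * (0))) (98426241/400000000) (496051/500000)
        (fin6 (by rw [inner_pt]; norm_num) (by rw [inner_pt]; norm_num) (by rw [inner_pt]; norm_num) (by rw [inner_pt]; norm_num) (by rw [inner_pt]; norm_num) (by rw [inner_pt]; norm_num))
        (fin6 (by rw [inner_pt]; norm_num) (by rw [inner_pt]; norm_num) (by rw [inner_pt]; norm_num) (by rw [inner_pt]; norm_num) (by rw [inner_pt]; norm_num) (by rw [inner_pt]; norm_num))
        (by apply sqle (by norm_num) ?_ (norm_nonneg _); rw [nsq_pt]; norm_num)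
        (by have h := nsq_pt (pt (9921/10000) (0)); norm_num at h; nlinarith [norm_nonneg (pt (9921/10000) (0))])
        (by rw [inner_pt]; push_cast; norm_num)
    · -- (1, 1)
      exact certL (pt (2321/10000) (24113/25000)) (L (3 * (1)) (2 * (1))) (2182417373203/4582000000000) (198411/200000)
        (fin6 (by rw [inner_pt]; norm_num) (by rw [inner_pt]; norm_num) (by rw [inner_pt]; norm_num) (by rw [inner_pt]; norm_num) (by rw [inner_pt]; norm_num) (by rw [inner_pt]; norm_num))
        (fin6 (by rw [inner_pt]; norm_num) (by rw [inner_pt]; norm_num) (by rw [inner_pt]; norm_num) (by rw [inner_pt]; norm_num) (by rw [inner_pt]; norm_num) (by rw [inner_pt]; norm_num))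
        (by apply sqle (by norm_num) ?_ (norm_nonneg _); rw [nsq_pt]; norm_num)
        (by have h := nsq_pt (pt (2321/10000) (24113/25000)); norm_num at h; nlinarith [norm_nonneg (pt (2321/10000) (24113/25000))])
        (by rw [inner_pt]; push_cast; norm_num)

lemma extremal : ∀ i : Fin 6, w i ∉ convexHull ℝ (w '' {j : Fin 6 | j ≠ i}) := by
  refine fin6 ?_ ?_ ?_ ?_ ?_ ?_
  · intro hmem
    have hb : ∀ j : Fin 6, j ≠ (0 : Fin 6) → ⟪w 0, w j⟫ ≤ (2730421/12800000) := by
      refine fin6 ?_ ?_ ?_ ?_ ?_ ?_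
      · intro hj; exact absurd rfl hj
      · intro hj; rw [inner_pt]; norm_num
      · intro hj; rw [inner_pt]; norm_num
      · intro hj; rw [inner_pt]; norm_num
      · intro hj; rw [inner_pt]; norm_num
      · intro hj; rw [inner_pt]; norm_num
    have hcvx : Convex ℝ {x : Plane | ⟪w 0, x⟫ ≤ (2730421/12800000)} :=
      convex_halfSpace_le ⟨fun a b => inner_add_right _ _ _,
        fun r a => by rw [real_inner_smul_right, smul_eq_mul]⟩ _
    have hsub' : w '' {j : Fin 6 | j ≠ (0 : Fin 6)} ⊆ {x : Plane | ⟪w 0, x⟫ ≤ (2730421/12800000)} := by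
      rintro x ⟨j, hj, rfl⟩
      exact hb j hj
    have hfin := convexHull_min hsub' hcvx hmem
    rw [Set.mem_setOf_eq, inner_pt] at hfin
    norm_num at hfin
  · intro hmem
    have hb : ∀ j : Fin 6, j ≠ (1 : Fin 6) → ⟪w 1, w j⟫ ≤ (6151181/25000000) := by
      refine fin6 ?_ ?_ ?_ ?_ ?_ ?_
      · intro hj; rw [inner_pt]; norm_num
      · intro hj; exact absurd rfl hj
      · intro hj; rw [inner_pt]; norm_num
      · intro hj; rw [inner_pt]; norm_num
      · intro hj; rw [inner_pt]; norm_num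
      · intro hj; rw [inner_pt]; norm_num
    have hcvx : Convex ℝ {x : Plane | ⟪w 1, x⟫ ≤ (6151181/25000000)} :=
      convex_halfSpace_le ⟨fun a b => inner_add_right _ _ _,
        fun r a => by rw [real_inner_smul_right, smul_eq_mul]⟩ _
    have hsub' : w '' {j : Fin 6 | j ≠ (1 : Fin 6)} ⊆ {x : Plane | ⟪w 1, x⟫ ≤ (6151181/25000000)} := by
      rintro x ⟨j, hj, rfl⟩
      exact hb j hj
    have hfin := convexHull_min hsub' hcvx hmem
    rw [Set.mem_setOf_eq, inner_pt] at hfin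
    norm_num at hfin
  · intro hmem
    have hb : ∀ j : Fin 6, j ≠ (2 : Fin 6) → ⟪w 2, w j⟫ ≤ (6151181/25000000) := by
      refine fin6 ?_ ?_ ?_ ?_ ?_ ?_
      · intro hj; rw [inner_pt]; norm_num
      · intro hj; rw [inner_pt]; norm_num
      · intro hj; exact absurd rfl hj
      · intro hj; rw [inner_pt]; norm_num
      · intro hj; rw [inner_pt]; norm_num
      · intro hj; rw [inner_pt]; norm_num
    have hcvx : Convex ℝ {x : Plane | ⟪w 2, x⟫ ≤ (6151181/25000000)} :=
      convex_halfSpace_le ⟨fun a b => inner_add_right _ _ _,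
        fun r a => by rw [real_inner_smul_right, smul_eq_mul]⟩ _
    have hsub' : w '' {j : Fin 6 | j ≠ (2 : Fin 6)} ⊆ {x : Plane | ⟪w 2, x⟫ ≤ (6151181/25000000)} := by
      rintro x ⟨j, hj, rfl⟩
      exact hb j hj
    have hfin := convexHull_min hsub' hcvx hmem
    rw [Set.mem_setOf_eq, inner_pt] at hfin
    norm_num at hfin
  · intro hmem
    have hb : ∀ j : Fin 6, j ≠ (3 : Fin 6) → ⟪w 3, w j⟫ ≤ (2730421/12800000) := by
      refine fin6 ?_ ?_ ?_ ?_ ?_ ?_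
      · intro hj; rw [inner_pt]; norm_num
      · intro hj; rw [inner_pt]; norm_num
      · intro hj; rw [inner_pt]; norm_num
      · intro hj; exact absurd rfl hj
      · intro hj; rw [inner_pt]; norm_num
      · intro hj; rw [inner_pt]; norm_num
    have hcvx : Convex ℝ {x : Plane | ⟪w 3, x⟫ ≤ (2730421/12800000)} :=
      convex_halfSpace_le ⟨fun a b => inner_add_right _ _ _,
        fun r a => by rw [real_inner_smul_right, smul_eq_mul]⟩ _
    have hsub' : w '' {j : Fin 6 | j ≠ (3 : Fin 6)} ⊆ {x : Plane | ⟪w 3, x⟫ ≤ (2730421/12800000)} := by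
      rintro x ⟨j, hj, rfl⟩
      exact hb j hj
    have hfin := convexHull_min hsub' hcvx hmem
    rw [Set.mem_setOf_eq, inner_pt] at hfin
    norm_num at hfin
  · intro hmem
    have hb : ∀ j : Fin 6, j ≠ (4 : Fin 6) → ⟪w 4, w j⟫ ≤ (6151181/25000000) := by
      refine fin6 ?_ ?_ ?_ ?_ ?_ ?_
      · intro hj; rw [inner_pt]; norm_num
      · intro hj; rw [inner_pt]; norm_num
      · intro hj; rw [inner_pt]; norm_num
      · intro hj; rw [inner_pt]; norm_num
      · intro hj; exact absurd rfl hj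
      · intro hj; rw [inner_pt]; norm_num
    have hcvx : Convex ℝ {x : Plane | ⟪w 4, x⟫ ≤ (6151181/25000000)} :=
      convex_halfSpace_le ⟨fun a b => inner_add_right _ _ _,
        fun r a => by rw [real_inner_smul_right, smul_eq_mul]⟩ _
    have hsub' : w '' {j : Fin 6 | j ≠ (4 : Fin 6)} ⊆ {x : Plane | ⟪w 4, x⟫ ≤ (6151181/25000000)} := by
      rintro x ⟨j, hj, rfl⟩
      exact hb j hj
    have hfin := convexHull_min hsub' hcvx hmem
    rw [Set.mem_setOf_eq, inner_pt] at hfin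
    norm_num at hfin
  · intro hmem
    have hb : ∀ j : Fin 6, j ≠ (5 : Fin 6) → ⟪w 5, w j⟫ ≤ (6151181/25000000) := by
      refine fin6 ?_ ?_ ?_ ?_ ?_ ?_
      · intro hj; rw [inner_pt]; norm_num
      · intro hj; rw [inner_pt]; norm_num
      · intro hj; rw [inner_pt]; norm_num
      · intro hj; rw [inner_pt]; norm_num
      · intro hj; rw [inner_pt]; norm_num
      · intro hj; exact absurd rfl hj
    have hcvx : Convex ℝ {x : Plane | ⟪w 5, x⟫ ≤ (6151181/25000000)} :=
      convex_halfSpace_le ⟨fun a b => inner_add_right _ _ _,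
        fun r a => by rw [real_inner_smul_right, smul_eq_mul]⟩ _
    have hsub' : w '' {j : Fin 6 | j ≠ (5 : Fin 6)} ⊆ {x : Plane | ⟪w 5, x⟫ ≤ (6151181/25000000)} := by
      rintro x ⟨j, hj, rfl⟩
      exact hb j hj
    have hfin := convexHull_min hsub' hcvx hmem
    rw [Set.mem_setOf_eq, inner_pt] at hfin
    norm_num at hfin

end St18

/-- There exist a closed convex hexagon H ⊂ ℝ² of Euclidean diameter at
most 1 (the convex hull of 6 points, each of which is a genuine vertex), a countable
family of isometric copies of H tiling the plane (their union is ℝ² and their interiors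
are pairwise disjoint), and a 6-colouring of the tiles such that any two distinct tiles
of the same colour are at distance at least 0.9920 from each other. This improves Ivanov's bound d(6) ≈ 0.991445. -/
theorem statement18 :
    ∃ (H : Set Plane) (v : Fin 6 → Plane),
      Function.Injective v ∧
      (∀ i : Fin 6, v i ∉ convexHull ℝ (v '' {j : Fin 6 | j ≠ i})) ∧
      H = convexHull ℝ (Set.range v) ∧
      (∀ p ∈ H, ∀ q ∈ H, dist p q ≤ 1) ∧
      ∃ (T : ℕ → Set Plane) (col : ℕ → Fin 6),
        (∀ n : ℕ, ∃ f : Plane ≃ᵢ Plane, T n = f '' H) ∧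
        (⋃ n : ℕ, T n) = Set.univ ∧
        (∀ n m : ℕ, n ≠ m → interior (T n) ∩ interior (T m) = ∅) ∧
        (∀ n m : ℕ, n ≠ m → col n = col m →
          ∀ p ∈ T n, ∀ q ∈ T m, (0.9920 : ℝ) ≤ dist p q) := by
  classical
  refine ⟨St18.H, St18.w, ?_, St18.extremal, rfl, ?_, St18.T,
    fun n => St18.c6 (St18.e6 n), ?_, St18.T_cover, St18.T_disj, ?_⟩
  · -- injectivity
    intro i j hij
    by_contra hne
    apply St18.extremal i
    apply subset_convexHull ℝ _
    exact ⟨j, by simpa using Ne.symm hne, hij.symm⟩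
  · -- diameter
    intro p hp q hq
    rw [dist_eq_norm]
    have := norm_sub_le p q
    have h1 := St18.H_ball p hp
    have h2 := St18.H_ball q hq
    linarith
  · -- isometric copies
    intro n
    exact ⟨IsometryEquiv.addLeft (St18.lam n), rfl⟩
  · -- colours
    intro n m hnm hcol p hp q hq
    obtain ⟨h1, hh1, hpe⟩ := St18.memT.1 hp
    obtain ⟨h2, hh2, hqe⟩ := St18.memT.1 hq
    obtain ⟨hdvd3, hdvd2⟩ := St18.c6_eq hcol
    obtain ⟨k, hk⟩ := hdvd3
    obtain ⟨l, hl⟩ := hdvd2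
    have hkl : ¬(k = 0 ∧ l = 0) := by
      rintro ⟨rfl, rfl⟩
      apply hnm
      apply St18.e6.injective
      apply Prod.ext <;> omega
    have hlat : St18.lam n - St18.lam m = St18.L (3*k) (2*l) := by
      have := St18.L_sub (St18.e6 n).1 (St18.e6 n).2 (St18.e6 m).1 (St18.e6 m).2
      rw [St18.lam, St18.lam, this, hk, hl]
    have hvec : p - q = h1 - h2 + St18.L (3*k) (2*l) := by
      rw [← hpe, ← hqe, ← hlat]
      abel
    rw [dist_eq_norm, hvec]
    have := St18.dlb k l hkl h1 hh1 h2 hh2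
    norm_num at this ⊢
    linarith
end
end
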